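/- arXiv:2002.12510 — 8 statements merged into one kernel-verified Lean document; each statement's English description precedes it below -/
import Mathlib

section
/- Let C = {c_1, …, c_m} with m ≥ 1, let d ∉ C be a further candidate, and let s = (s_1, …, s_{m+1}) be a scoring vector of length m+1 with s_{m+1} = 0. Then for every family of integers η_{i,j} (1 ≤ i ≤ m, 1 ≤ j ≤ m) there exist a natural number λ and a total profile Q on C ∪ {d} consisting of at most m + (m + m²)·Σ_{i=1}^m Σ_{j=1}^m |η_{i,j}| votes such that s(Q, c_i) = λ + Σ_{j=1}^m η_{i,j}·(s_j − s_{j+1}) for every 1 ≤ i ≤ m, and s(Q, d) < λ. -/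
/-- The score of candidate `c` in a profile (a list of votes) under scoring vector `s`.
A vote assigns each candidate a position in `Fin m` (position `0` being most preferred),
and the candidate at position `k` receives `s k` points. -/
def score {C : Type*} {m : ℕ} (s : Fin m → ℕ) (P : List (C ≃ Fin m)) (c : C) : ℕ :=
  (P.map fun T => s (T c)).sum

namespace Stmt0Aux

variable {m : ℕ}

/-- fixed bijection: `some x ↦ x.castSucc`, `none ↦ last`. -/
def sig (m : ℕ) : Option (Fin m) ≃ Fin (m + 1) := finSuccEquivLast.symm

@[simp] lemma sig_some (x : Fin m) : sig m (some x) = x.castSucc :=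
  finSuccEquivLast_symm_some x

@[simp] lemma sig_none : sig m none = Fin.last m :=
  finSuccEquivLast_symm_none

/-- base vote `k`: candidate `x` at position `(x+k).castSucc`, `d` last. -/
def bvote [NeZero m] (k : Fin m) : Option (Fin m) ≃ Fin (m + 1) :=
  (Equiv.optionCongr (Equiv.addRight k)).trans (sig m)

/-- gadget vote. -/
def gvote (i j : Fin m) (k : Fin (m + 1)) : Option (Fin m) ≃ Fin (m + 1) :=
  (if k = j.succ then Equiv.swap (some i) none else Equiv.refl _).trans
    (((sig m).trans (Equiv.swap i.castSucc 0)).trans (Equiv.addRight k))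

def pg (i j : Fin m) : List (Option (Fin m) ≃ Fin (m + 1)) :=
  (List.finRange (m + 1)).map (gvote i j)

def ng (i j : Fin m) : List (Option (Fin m) ≃ Fin (m + 1)) :=
  (List.finRange m).flatMap (fun i' => if i' = i then [] else pg i' j)

/- basic score lemmas -/

lemma score_append {C : Type*} {n : ℕ} (s : Fin n → ℕ) (P P' : List (C ≃ Fin n)) (c : C) :
    score s (P ++ P') c = score s P c + score s P' c := by
  simp [score]

lemma score_flatMap {C : Type*} {n : ℕ} (s : Fin n → ℕ) {α : Type*} (l : List α)
    (f : α → List (C ≃ Fin n)) (c : C) :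
    score s (l.flatMap f) c = (l.map fun x => score s (f x) c).sum := by
  induction l with
  | nil => rfl
  | cons a t ih => simp [List.flatMap_cons, score_append, ih]

lemma score_flatMap_finRange {C : Type*} {n : ℕ} (s : Fin n → ℕ) (n' : ℕ)
    (f : Fin n' → List (C ≃ Fin n)) (c : C) :
    score s ((List.finRange n').flatMap f) c = ∑ k : Fin n', score s (f k) c := by
  rw [score_flatMap, ← Fin.sum_univ_def]

lemma score_replicate_flatten {C : Type*} {n : ℕ} (s : Fin n → ℕ) (r : ℕ)
    (P : List (C ≃ Fin n)) (c : C) :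
    score s ((List.replicate r P).flatten) c = r * score s P c := by
  induction r with
  | zero => simp [score]
  | succ k ih => rw [List.replicate_succ, List.flatten_cons, score_append, ih]; ring

lemma score_map_finRange {C : Type*} {n : ℕ} (s : Fin n → ℕ) (n' : ℕ)
    (f : Fin n' → (C ≃ Fin n)) (c : C) :
    score s ((List.finRange n').map f) c = ∑ k : Fin n', s (f k c) := by
  simp [score, List.map_map, Fin.sum_univ_def, Function.comp_def]

/- sum helpers -/

lemma sum_if_single {n : ℕ} (t : Fin n) (a : ℤ) (g : Fin n → ℤ) :
    ∑ k : Fin n, (if k = t then a else g k) = (∑ k : Fin n, g k) + a - g t := by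
  have h : ∀ k : Fin n, (if k = t then a else g k)
      = g k + (if k = t then a - g k else 0) := by
    intro k; split <;> ring
  rw [Finset.sum_congr rfl (fun k _ => h k), Finset.sum_add_distrib,
    Finset.sum_ite_eq' Finset.univ t]
  simp; ring

lemma sum_shift {n : ℕ} [NeZero n] (p : Fin n) (g : Fin n → ℤ) :
    ∑ k : Fin n, g (p + k) = ∑ k : Fin n, g k :=
  Equiv.sum_comp (Equiv.addLeft p) g

lemma last_add_succ (j : Fin m) : (Fin.last m : Fin (m + 1)) + j.succ = j.castSucc := by
  ext
  simp only [Fin.add_def, Fin.val_last, Fin.val_succ, Fin.coe_castSucc]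
  rw [show m + ((j : ℕ) + 1) = (j : ℕ) + (m + 1) by ring, Nat.add_mod_right]
  exact Nat.mod_eq_of_lt (by omega)

section
variable [NeZero m]

lemma last_ne_zero' : (Fin.last m : Fin (m + 1)) ≠ 0 := by
  simp only [ne_eq, Fin.ext_iff, Fin.val_last, Fin.val_zero]
  exact NeZero.ne m

lemma swap_last (i : Fin m) :
    Equiv.swap i.castSucc (0 : Fin (m + 1)) (Fin.last m) = Fin.last m :=
  Equiv.swap_apply_of_ne_of_ne (Fin.castSucc_lt_last i).ne' last_ne_zero'

lemma score_base_some (s : Fin (m + 1) → ℕ) (hlast : s (Fin.last m) = 0) (i : Fin m) :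
    (score s ((List.finRange m).map bvote) (some i) : ℤ) = ∑ k : Fin (m + 1), (s k : ℤ) := by
  rw [score_map_finRange]
  push_cast
  have h1 : ∀ k : Fin m, bvote k (some i) = (i + k).castSucc := by
    intro k; simp [bvote]
  calc ∑ k : Fin m, (s (bvote k (some i)) : ℤ)
      = ∑ k : Fin m, (s ((i + k).castSucc) : ℤ) := by
        exact Finset.sum_congr rfl fun k _ => by rw [h1 k]
    _ = ∑ x : Fin m, (s x.castSucc : ℤ) := sum_shift i (fun x : Fin m => (s x.castSucc : ℤ))
    _ = ∑ k : Fin (m + 1), (s k : ℤ) := by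
        rw [Fin.sum_univ_castSucc (f := fun k : Fin (m + 1) => (s k : ℤ))]
        simp [hlast]

lemma score_base_none (s : Fin (m + 1) → ℕ) (hlast : s (Fin.last m) = 0) :
    score s ((List.finRange m).map bvote) none = 0 := by
  rw [score_map_finRange]
  simp [bvote, hlast]

lemma score_pg_self (s : Fin (m + 1) → ℕ) (i j : Fin m) :
    (score s (pg i j) (some i) : ℤ)
      = (∑ k : Fin (m + 1), (s k : ℤ)) + (s j.castSucc : ℤ) - (s j.succ : ℤ) := by
  rw [pg, score_map_finRange]
  push_cast
  have hval : ∀ k : Fin (m + 1), (s (gvote i j k (some i)) : ℤ)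
      = if k = j.succ then (s j.castSucc : ℤ) else (s k : ℤ) := by
    intro k
    by_cases hk : k = j.succ
    · subst hk
      rw [if_pos rfl]
      simp [gvote, swap_last i, last_add_succ]
    · rw [if_neg hk]
      simp [gvote, hk]
  rw [Finset.sum_congr rfl fun k _ => hval k, sum_if_single]

lemma score_pg_none (s : Fin (m + 1) → ℕ) (i j : Fin m) :
    (score s (pg i j) none : ℤ)
      = (∑ k : Fin (m + 1), (s k : ℤ)) + (s j.succ : ℤ) - (s j.castSucc : ℤ) := by
  rw [pg, score_map_finRange]
  push_cast
  have hval : ∀ k : Fin (m + 1), (s (gvote i j k none) : ℤ)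
      = if k = j.succ then (s j.succ : ℤ) else (s (Fin.last m + k) : ℤ) := by
    intro k
    by_cases hk : k = j.succ
    · subst hk
      rw [if_pos rfl]
      simp [gvote]
    · rw [if_neg hk]
      simp [gvote, hk, swap_last i]
  rw [Finset.sum_congr rfl fun k _ => hval k, sum_if_single]
  rw [sum_shift (Fin.last m) (fun k => (s k : ℤ)), last_add_succ]

omit [NeZero m] in
lemma score_pg_ne (s : Fin (m + 1) → ℕ) (i j x : Fin m) (hx : x ≠ i) :
    (score s (pg i j) (some x) : ℤ) = ∑ k : Fin (m + 1), (s k : ℤ) := by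
  rw [pg, score_map_finRange]
  push_cast
  have h1 : (Equiv.swap (some i) (none : Option (Fin m))) (some x) = some x :=
    Equiv.swap_apply_of_ne_of_ne (by simpa using hx) (by simp)
  have hval : ∀ k : Fin (m + 1), gvote i j k (some x)
      = Equiv.swap i.castSucc (0 : Fin (m + 1)) x.castSucc + k := by
    intro k
    by_cases hk : k = j.succ
    · subst hk; simp [gvote, h1]
    · simp [gvote, hk]
  rw [Finset.sum_congr rfl fun k _ => by rw [hval k]]
  exact sum_shift (Equiv.swap i.castSucc (0 : Fin (m + 1)) x.castSucc) (fun k => (s k : ℤ))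

lemma score_ng_some (s : Fin (m + 1) → ℕ) (i j x : Fin m) :
    (score s (ng i j) (some x) : ℤ) =
      if x = i then
        (m : ℤ) * (∑ k : Fin (m + 1), (s k : ℤ)) - (∑ k : Fin (m + 1), (s k : ℤ))
      else
        (m : ℤ) * (∑ k : Fin (m + 1), (s k : ℤ)) - (∑ k : Fin (m + 1), (s k : ℤ))
          + ((s j.castSucc : ℤ) - (s j.succ : ℤ)) := by
  set W : ℤ := ∑ k : Fin (m + 1), (s k : ℤ) with hW
  set D : ℤ := (s j.castSucc : ℤ) - (s j.succ : ℤ) with hD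
  rw [ng, score_flatMap_finRange]
  push_cast
  have hterm : ∀ i' : Fin m, (score s (if i' = i then [] else pg i' j) (some x) : ℤ)
      = if i' = i then 0 else (if i' = x then W + D else W) := by
    intro i'
    by_cases h1 : i' = i
    · simp [h1, score]
    · rw [if_neg h1, if_neg h1]
      by_cases h2 : i' = x
      · subst h2
        rw [if_pos rfl, score_pg_self]
        rw [hW, hD]; ring
      · rw [if_neg h2, score_pg_ne s i' j x (fun h => h2 h.symm)]
  rw [Finset.sum_congr rfl fun i' _ => hterm i']
  by_cases hx : x = i
  · subst hx
    rw [if_pos rfl]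
    have hcoll : ∀ i' : Fin m,
        (if i' = x then (0 : ℤ) else if i' = x then W + D else W)
          = if i' = x then 0 else W := by
      intro i'; split <;> simp [*]
    rw [Finset.sum_congr rfl fun i' _ => hcoll i', sum_if_single x 0 (fun _ => W)]
    simp only [Finset.sum_const, Finset.card_univ, Fintype.card_fin, nsmul_eq_mul]
    ring
  · rw [if_neg hx]
    rw [sum_if_single i 0 (fun i' => if i' = x then W + D else W)]
    rw [sum_if_single x (W + D) (fun _ => W)]
    rw [if_neg (fun h : i = x => hx h.symm)]
    simp only [Finset.sum_const, Finset.card_univ, Fintype.card_fin, nsmul_eq_mul]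
    ring

lemma score_ng_none (s : Fin (m + 1) → ℕ) (i j : Fin m) :
    (score s (ng i j) none : ℤ) =
      (m : ℤ) * ((∑ k : Fin (m + 1), (s k : ℤ)) + (s j.succ : ℤ) - (s j.castSucc : ℤ))
        - ((∑ k : Fin (m + 1), (s k : ℤ)) + (s j.succ : ℤ) - (s j.castSucc : ℤ)) := by
  set V : ℤ := (∑ k : Fin (m + 1), (s k : ℤ)) + (s j.succ : ℤ) - (s j.castSucc : ℤ) with hV
  rw [ng, score_flatMap_finRange]
  push_cast
  have hterm : ∀ i' : Fin m, (score s (if i' = i then [] else pg i' j) none : ℤ)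
      = if i' = i then 0 else V := by
    intro i'
    by_cases h1 : i' = i
    · simp [h1, score]
    · rw [if_neg h1, if_neg h1, score_pg_none]
  rw [Finset.sum_congr rfl fun i' _ => hterm i', sum_if_single i 0 (fun _ => V)]
  simp only [Finset.sum_const, Finset.card_univ, Fintype.card_fin, nsmul_eq_mul]
  ring

end

lemma length_flatMap_finRange {α : Type*} (n' : ℕ) (f : Fin n' → List α) :
    ((List.finRange n').flatMap f).length = ∑ k : Fin n', (f k).length := by
  rw [List.length_flatMap, ← Fin.sum_univ_def]

end Stmt0Aux

set_option maxHeartbeats 1000000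
open Stmt0Aux

/-- for every scoring vector `s` of length `m+1` with last value `0` and every
family of integers `η i j`, there are a natural number `λ` and a total profile `Q` on
`C ∪ {d}` (modelled as `Option (Fin m)`, with `none` playing the role of `d`) of at most
`m + (m + m²)·Σ|η i j|` votes such that `s(Q, cᵢ) = λ + Σⱼ η i j (sⱼ − sⱼ₊₁)` for every `i`
and `s(Q, d) < λ`. -/
theorem stmt0 (m : ℕ) (hm : 1 ≤ m)
    (s : Fin (m + 1) → ℕ) (hanti : Antitone s)
    (hnt : s (Fin.last m) < s 0) (hlast : s (Fin.last m) = 0)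
    (η : Fin m → Fin m → ℤ) :
    ∃ (lam : ℕ) (Q : List (Option (Fin m) ≃ Fin (m + 1))),
      Q.length ≤ m + (m + m ^ 2) * ∑ i : Fin m, ∑ j : Fin m, (η i j).natAbs ∧
      (∀ i : Fin m, (score s Q (some i) : ℤ) =
        (lam : ℤ) + ∑ j : Fin m, η i j * ((s j.castSucc : ℤ) - (s j.succ : ℤ))) ∧
      score s Q none < lam := by
  haveI : NeZero m := ⟨by omega⟩
  -- abbreviations
  set W : ℤ := ∑ k : Fin (m + 1), (s k : ℤ) with hWdef
  set Wn : ℕ := ∑ k : Fin (m + 1), s k with hWndef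
  have hWcast : (Wn : ℤ) = W := by rw [hWndef, hWdef]; push_cast; rfl
  have hΔ : ∀ j : Fin m, (s j.succ : ℤ) ≤ (s j.castSucc : ℤ) := by
    intro j; exact_mod_cast hanti (Fin.castSucc_le_succ j)
  have hW1 : (1 : ℤ) ≤ W := by
    have h0 : 1 ≤ s 0 := by omega
    have := Finset.single_le_sum (f := fun k : Fin (m + 1) => (s k : ℤ))
      (fun _ _ => by positivity) (Finset.mem_univ 0)
    have h0' : (1 : ℤ) ≤ (s 0 : ℤ) := by exact_mod_cast h0
    rw [hWdef]; linarith
  have hmZ : (1 : ℤ) ≤ (m : ℤ) := by exact_mod_cast hm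
  -- the profile
  set Gb : Fin m → Fin m → List (Option (Fin m) ≃ Fin (m + 1)) := fun a b =>
    (List.replicate (η a b).natAbs (if 0 ≤ η a b then pg a b else ng a b)).flatten
    with hGb
  set Q : List (Option (Fin m) ≃ Fin (m + 1)) :=
    ((List.finRange m).map bvote) ++
      (List.finRange m).flatMap (fun a => (List.finRange m).flatMap (fun b => Gb a b))
    with hQ
  -- the threshold
  set lam : ℕ := Wn + ∑ a : Fin m, ∑ b : Fin m, (η a b).natAbs *
      (if 0 ≤ η a b then Wn else ((m - 1) * Wn + (s b.castSucc - s b.succ))) with hlam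
  -- decomposition of scores of Q
  have hdec : ∀ c : Option (Fin m), score s Q c
      = score s ((List.finRange m).map bvote) c
        + ∑ a : Fin m, ∑ b : Fin m, (η a b).natAbs *
            score s (if 0 ≤ η a b then pg a b else ng a b) c := by
    intro c
    rw [hQ, score_append, score_flatMap_finRange]
    congr 1
    refine Finset.sum_congr rfl fun a _ => ?_
    rw [score_flatMap_finRange]
    exact Finset.sum_congr rfl fun b _ => by rw [hGb, score_replicate_flatten]
  -- cast of lam
  have hlamcast : (lam : ℤ) = W + ∑ a : Fin m, ∑ b : Fin m, ((η a b).natAbs : ℤ) *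
      (if 0 ≤ η a b then W
        else (m : ℤ) * W - W + ((s b.castSucc : ℤ) - s b.succ)) := by
    rw [hlam]
    push_cast
    rw [hWcast]
    congr 1
    refine Finset.sum_congr rfl fun a _ => Finset.sum_congr rfl fun b _ => ?_
    congr 1
    by_cases hab : 0 ≤ η a b
    · rw [if_pos hab, if_pos hab]
    · rw [if_neg hab, if_neg hab]
      push_cast [Nat.cast_sub (hanti (Fin.castSucc_le_succ b)), Nat.cast_sub hm]
      ring
  refine ⟨lam, Q, ?_, ?_, ?_⟩
  · -- length bound
    have hGlen : ∀ a b : Fin m, (Gb a b).length ≤ (η a b).natAbs * (m + m ^ 2) := by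
      intro a b
      rw [hGb]
      simp only [List.length_flatten, List.map_replicate, List.sum_replicate, smul_eq_mul]
      refine Nat.mul_le_mul_left _ ?_
      split_ifs with h
      · have hpl : (pg (m := m) a b).length = m + 1 := by simp [pg]
        rw [hpl]
        nlinarith [Nat.one_le_pow 2 m (by omega)]
      · rw [ng, length_flatMap_finRange]
        have hb : ∀ i' : Fin m, (if i' = a then ([] : List (Option (Fin m) ≃ Fin (m + 1)))
            else pg i' b).length ≤ m + 1 := by
          intro i'; split_ifs <;> simp [pg]
        calc ∑ i' : Fin m, (if i' = a then ([] : List (Option (Fin m) ≃ Fin (m + 1)))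
              else pg i' b).length
            ≤ ∑ _i' : Fin m, (m + 1) := Finset.sum_le_sum (fun i' _ => hb i')
          _ = m * (m + 1) := by simp [Finset.sum_const, mul_comm]
          _ ≤ m + m ^ 2 := by nlinarith
    rw [hQ, List.length_append, List.length_map, List.length_finRange,
      length_flatMap_finRange]
    refine Nat.add_le_add_left ?_ m
    calc ∑ a : Fin m, ((List.finRange m).flatMap (fun b => Gb a b)).length
        = ∑ a : Fin m, ∑ b : Fin m, (Gb a b).length :=
          Finset.sum_congr rfl fun a _ => length_flatMap_finRange m _
      _ ≤ ∑ a : Fin m, ∑ b : Fin m, (η a b).natAbs * (m + m ^ 2) :=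
          Finset.sum_le_sum fun a _ => Finset.sum_le_sum fun b _ => hGlen a b
      _ = (m + m ^ 2) * ∑ a : Fin m, ∑ b : Fin m, (η a b).natAbs := by
          rw [Finset.mul_sum]
          refine Finset.sum_congr rfl fun a _ => ?_
          rw [Finset.mul_sum]
          refine Finset.sum_congr rfl fun b _ => ?_
          ring
  · -- the score identities
    intro x
    have hcast : (score s Q (some x) : ℤ)
        = W + ∑ a : Fin m, ∑ b : Fin m, ((η a b).natAbs : ℤ) *
            (score s (if 0 ≤ η a b then pg a b else ng a b) (some x) : ℤ) := by
      rw [hdec (some x)]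
      push_cast
      rw [score_base_some s hlast x]
    have hterm : ∀ a b : Fin m,
        ((score s (if 0 ≤ η a b then pg a b else ng a b) (some x) : ℕ) : ℤ)
          = if 0 ≤ η a b then (if x = a then W + ((s b.castSucc : ℤ) - s b.succ) else W)
            else (if x = a then (m : ℤ) * W - W
              else (m : ℤ) * W - W + ((s b.castSucc : ℤ) - s b.succ)) := by
      intro a b
      by_cases hab : 0 ≤ η a b
      · rw [if_pos hab, if_pos hab]
        by_cases hx : x = a
        · subst hx; rw [if_pos rfl, score_pg_self]; ring
        · rw [if_neg hx, score_pg_ne s a b x hx]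
      · rw [if_neg hab, if_neg hab, score_ng_some]
    have hsum1 : ∑ a : Fin m, ∑ b : Fin m, ((η a b).natAbs : ℤ) *
          (score s (if 0 ≤ η a b then pg a b else ng a b) (some x) : ℤ)
        = ∑ a : Fin m, ∑ b : Fin m, ((η a b).natAbs : ℤ) *
          (if 0 ≤ η a b then (if x = a then W + ((s b.castSucc : ℤ) - s b.succ) else W)
            else (if x = a then (m : ℤ) * W - W
              else (m : ℤ) * W - W + ((s b.castSucc : ℤ) - s b.succ))) :=
      Finset.sum_congr rfl fun a _ => Finset.sum_congr rfl fun b _ => by rw [hterm a b]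
    have hsplit : ∑ a : Fin m, ∑ b : Fin m,
          (if x = a then η a b * ((s b.castSucc : ℤ) - (s b.succ : ℤ)) else 0)
        = ∑ j : Fin m, η x j * ((s j.castSucc : ℤ) - (s j.succ : ℤ)) := by
      have hrow : ∀ a : Fin m, ∑ b : Fin m,
            (if x = a then η a b * ((s b.castSucc : ℤ) - (s b.succ : ℤ)) else 0)
          = if x = a then ∑ b : Fin m, η a b * ((s b.castSucc : ℤ) - (s b.succ : ℤ))
            else 0 := by
        intro a; split_ifs <;> simp
      rw [Finset.sum_congr rfl fun a _ => hrow a, Finset.sum_ite_eq Finset.univ x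
        (fun a => ∑ b : Fin m, η a b * ((s b.castSucc : ℤ) - (s b.succ : ℤ)))]
      simp
    rw [hcast, hsum1, hlamcast, ← hsplit, add_assoc, ← Finset.sum_add_distrib]
    congr 1
    refine Finset.sum_congr rfl fun a _ => ?_
    rw [← Finset.sum_add_distrib]
    refine Finset.sum_congr rfl fun b _ => ?_
    by_cases hab : 0 ≤ η a b
    · have hn : ((η a b).natAbs : ℤ) = η a b := Int.natAbs_of_nonneg hab
      rw [if_pos hab, if_pos hab]
      by_cases hx : x = a
      · rw [if_pos hx, if_pos hx, hn]; ring
      · rw [if_neg hx, if_neg hx]; ring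
    · have hn : ((η a b).natAbs : ℤ) = -η a b :=
        Int.ofNat_natAbs_of_nonpos (le_of_not_ge hab)
      rw [if_neg hab, if_neg hab]
      by_cases hx : x = a
      · rw [if_pos hx, if_pos hx, hn]; ring
      · rw [if_neg hx, if_neg hx]; ring
  · -- d gets less than lam
    have hcast : (score s Q none : ℤ)
        = ∑ a : Fin m, ∑ b : Fin m, ((η a b).natAbs : ℤ) *
            (score s (if 0 ≤ η a b then pg a b else ng a b) none : ℤ) := by
      rw [hdec none]
      push_cast
      rw [score_base_none s hlast]
      push_cast
      ring
    have hZ : (score s Q none : ℤ) < (lam : ℤ) := by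
      rw [hcast, hlamcast]
      have hle : ∀ a b : Fin m, ((η a b).natAbs : ℤ) *
          (score s (if 0 ≤ η a b then pg a b else ng a b) none : ℤ)
            ≤ ((η a b).natAbs : ℤ) *
          (if 0 ≤ η a b then W
            else (m : ℤ) * W - W + ((s b.castSucc : ℤ) - s b.succ)) := by
        intro a b
        refine mul_le_mul_of_nonneg_left ?_ (by positivity)
        by_cases hab : 0 ≤ η a b
        · rw [if_pos hab, if_pos hab, score_pg_none]
          have := hΔ b; linarith
        · rw [if_neg hab, if_neg hab, score_ng_none]
          have h1 := hΔ b
          nlinarith [mul_nonneg (by linarith : (0:ℤ) ≤ (m:ℤ) - 1)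
            (by linarith : (0:ℤ) ≤ (s b.castSucc : ℤ) - s b.succ)]
      have hsle := Finset.sum_le_sum (fun a (_ : a ∈ (Finset.univ : Finset (Fin m))) =>
        Finset.sum_le_sum (fun b (_ : b ∈ (Finset.univ : Finset (Fin m))) => hle a b))
      linarith
    exact_mod_cast hZ
end

section
/- With P, P' and the 2-approval scoring vector as in the construction from the 3DM instance (described in the context), for every completion P̄ of P and every total profile Q on C it holds that s(P̄ ∪ Q, c) = s(P' ∪ Q, c); i.e., the score of the distinguished candidate c is the same in all completions of P. -/
/-- The `k`-approval scoring vector of length `m`: the top `k` positions get one point. -/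
def kApproval (m k : ℕ) : Fin m → ℕ := fun pos => if (pos : ℕ) < k then 1 else 0

/-- Candidates of Reduction 1: the element candidates of `X`, `Y`, `Z` (each of size `q`)
together with the distinguished candidate `c` and the fresh candidates `d₁` and `w`. -/
inductive Cand1 (q : ℕ) where
  | x (i : Fin q)
  | y (i : Fin q)
  | z (i : Fin q)
  | c
  | d1
  | w

/-- in Reduction 1 (for 2-approval, from a 3DM instance with triples
`S i = (x_{i₁}, y_{i₂}, z_{i₃})`), with `p'ᵢ = x_{i₁} ≻ y_{i₂} ≻ z_{i₃} ≻ d₁ ≻ C⃗'ᵢ`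
(where `c` precedes `w` in `C⃗'ᵢ`) and `pᵢ` the partial chain obtained by deleting
`z_{i₃}` and `d₁`, for every completion `T` of `P = (p₁, …, p_t)` and every total profile
`Q`, the score of `c` in `T ∪ Q` equals its score in `P' ∪ Q`. -/
theorem stmt3 (q t : ℕ) (hq : 1 ≤ q)
    (S : Fin t → Fin q × Fin q × Fin q)
    (p' : Fin t → (Cand1 q ≃ Fin (3 * q + 3)))
    (hx : ∀ i, (p' i (Cand1.x (S i).1)).val = 0)
    (hy : ∀ i, (p' i (Cand1.y (S i).2.1)).val = 1)
    (hz : ∀ i, (p' i (Cand1.z (S i).2.2)).val = 2)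
    (hd : ∀ i, (p' i Cand1.d1).val = 3)
    (hcw : ∀ i, p' i Cand1.c < p' i Cand1.w)
    (T : Fin t → (Cand1 q ≃ Fin (3 * q + 3)))
    (hT : ∀ (i : Fin t) (u v : Cand1 q),
      u ≠ Cand1.z (S i).2.2 → u ≠ Cand1.d1 →
      v ≠ Cand1.z (S i).2.2 → v ≠ Cand1.d1 →
      p' i u < p' i v → T i u < T i v)
    (Q : List (Cand1 q ≃ Fin (3 * q + 3))) :
    score (kApproval (3 * q + 3) 2) (List.ofFn T ++ Q) Cand1.c =
      score (kApproval (3 * q + 3) 2) (List.ofFn p' ++ Q) Cand1.c := by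
  -- c's position in p' i is at least 4
  have hc4 : ∀ i, 4 ≤ (p' i Cand1.c).val := by
    intro i
    have hne : ∀ (u : Cand1 q), u ≠ Cand1.c → (p' i Cand1.c).val ≠ (p' i u).val := by
      intro u hu h
      exact hu ((p' i).injective (Fin.ext h)).symm
    have h0 := hne (Cand1.x (S i).1) (by simp)
    have h1 := hne (Cand1.y (S i).2.1) (by simp)
    have h2 := hne (Cand1.z (S i).2.2) (by simp)
    have h3 := hne Cand1.d1 (by simp)
    rw [hx i] at h0; rw [hy i] at h1; rw [hz i] at h2; rw [hd i] at h3
    omega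
  have key : ∀ i, kApproval (3 * q + 3) 2 (T i Cand1.c) =
      kApproval (3 * q + 3) 2 (p' i Cand1.c) := by
    intro i
    have hxy : p' i (Cand1.x (S i).1) < p' i (Cand1.y (S i).2.1) := by
      rw [Fin.lt_def, hx i, hy i]; omega
    have hyc : p' i (Cand1.y (S i).2.1) < p' i Cand1.c := by
      rw [Fin.lt_def, hy i]; have := hc4 i; omega
    have ha : T i (Cand1.x (S i).1) < T i (Cand1.y (S i).2.1) :=
      hT i _ _ (by simp) (by simp) (by simp) (by simp) hxy
    have hb : T i (Cand1.y (S i).2.1) < T i Cand1.c :=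
      hT i _ _ (by simp) (by simp) (by simp) (by simp) hyc
    have hT2 : 2 ≤ (T i Cand1.c).val := by
      rw [Fin.lt_def] at ha hb; omega
    have hp2 : 2 ≤ (p' i Cand1.c).val := by have := hc4 i; omega
    simp [kApproval, Nat.not_lt.mpr hT2, Nat.not_lt.mpr hp2]
  simp only [score, List.map_append, List.sum_append, List.map_ofFn]
  congr 1
  exact congrArg List.sum (congrArg List.ofFn (funext fun i => key i))
end

section
/- With P, P', Q and the 2-approval scoring vector as in the construction from the 3DM instance (described in the context), the distinguished candidate c is a possible winner of the partial profile P ∪ Q under 2-approval if and only if the 3DM instance is positive. -/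
deriving instance DecidableEq, Fintype for Cand1

theorem cx_inj {q : ℕ} {a b : Fin q} (h : Cand1.x a = Cand1.x b) : a = b := by cases h; rfl
theorem cy_inj {q : ℕ} {a b : Fin q} (h : Cand1.y a = Cand1.y b) : a = b := by cases h; rfl
theorem cz_inj {q : ℕ} {a b : Fin q} (h : Cand1.z a = Cand1.z b) : a = b := by cases h; rfl

theorem score_decomp {C : Type*} {m t : ℕ} (s : Fin m → ℕ) (T : Fin t → (C ≃ Fin m))
    (Q : List (C ≃ Fin m)) (u : C) :
    score s (List.ofFn T ++ Q) u = (∑ i, s (T i u)) + score s Q u := by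
  simp [score, List.map_ofFn, List.sum_ofFn, Function.comp]

theorem sum_two (q : ℕ) (e : Cand1 q ≃ Fin (3*q+3)) : ∑ u, kApproval (3*q+3) 2 (e u) = 2 := by
  rw [Equiv.sum_comp e (fun p => kApproval (3*q+3) 2 p)]
  simp only [kApproval]
  rw [Fin.sum_univ_eq_sum_range (fun j => if j < 2 then 1 else 0), Finset.sum_boole]
  have : (Finset.range (3*q+3)).filter (fun i => i < 2) = Finset.range 2 := by
    ext a; simp [Finset.mem_filter]; omega
  rw [this]; simp

theorem kApp_of_lt {m : ℕ} {p : Fin m} (h : p.val < 2) : kApproval m 2 p = 1 := if_pos h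
theorem kApp_of_ge {m : ℕ} {p : Fin m} (h : 2 ≤ p.val) : kApproval m 2 p = 0 := if_neg (by omega)
theorem kApp_le_one {m : ℕ} (p : Fin m) : kApproval m 2 p ≤ 1 := by
  unfold kApproval; split <;> omega

theorem two_below {n : ℕ} {a b u : Fin n} (hab : a ≠ b) (h1 : a < u) (h2 : b < u) :
    2 ≤ u.val := by
  have : a.val ≠ b.val := fun h => hab (Fin.ext h)
  rw [Fin.lt_def] at h1 h2
  omega

theorem pval_ge_four {q : ℕ} (e : Cand1 q ≃ Fin (3*q+3)) {a b cc : Cand1 q}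
    (hxa : (e a).val = 0) (hyb : (e b).val = 1) (hzc : (e cc).val = 2)
    (hdd : (e Cand1.d1).val = 3)
    {u : Cand1 q} (h1 : u ≠ a) (h2 : u ≠ b) (h3 : u ≠ cc) (h4 : u ≠ Cand1.d1) :
    4 ≤ (e u).val := by
  have n1 : (e u).val ≠ (e a).val := fun h => h1 (e.injective (Fin.ext h))
  have n2 : (e u).val ≠ (e b).val := fun h => h2 (e.injective (Fin.ext h))
  have n3 : (e u).val ≠ (e cc).val := fun h => h3 (e.injective (Fin.ext h))
  have n4 : (e u).val ≠ (e Cand1.d1).val := fun h => h4 (e.injective (Fin.ext h))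
  omega

def sig (q : ℕ) (hq : 1 ≤ q) : Fin (3*q+3) ≃ Fin (3*q+3) :=
  (Equiv.swap (⟨0, by omega⟩ : Fin (3*q+3)) ⟨2, by omega⟩).trans
    (Equiv.swap (⟨1, by omega⟩ : Fin (3*q+3)) (⟨3, by omega⟩ : Fin (3*q+3)))

theorem sig_val (q : ℕ) (hq : 1 ≤ q) (a : Fin (3*q+3)) :
    ((sig q hq) a).val = if a.val = 0 then 2 else if a.val = 1 then 3
      else if a.val = 2 then 0 else if a.val = 3 then 1 else a.val := by
  rcases a with ⟨av, ha⟩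
  simp only [sig, Equiv.trans_apply, Equiv.swap_apply_def, Fin.ext_iff, Fin.mk.injEq]
  split_ifs <;> simp_all

theorem sig_mono (q : ℕ) (hq : 1 ≤ q) {a b : Fin (3*q+3)} (ha2 : a.val ≠ 2) (ha3 : a.val ≠ 3)
    (hb2 : b.val ≠ 2) (hb3 : b.val ≠ 3) (hab : a < b) : sig q hq a < sig q hq b := by
  have hva := sig_val q hq a
  have hvb := sig_val q hq b
  rw [Fin.lt_def] at *
  split_ifs at hva hvb <;> omega

theorem kApp_sig (q : ℕ) (hq : 1 ≤ q) (a : Fin (3*q+3)) :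
    kApproval (3*q+3) 2 (sig q hq a) = if a.val = 2 ∨ a.val = 3 then 1 else 0 := by
  have := sig_val q hq a
  simp only [kApproval]
  split_ifs at * <;> omega

theorem sum_indicator_unique {α : Type*} [Fintype α] [DecidableEq α] (P : α → Prop)
    [DecidablePred P] (i₀ : α) (h₀ : P i₀) (h₁ : ∀ j, P j → j = i₀) :
    (∑ i, if P i then (1:ℕ) else 0) = 1 := by
  have : ∀ i, (if P i then (1:ℕ) else 0) = if i = i₀ then 1 else 0 := by
    intro i
    by_cases h : P i
    · rw [if_pos h, if_pos (h₁ i h)]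
    · have hne : i ≠ i₀ := fun he => h (he ▸ h₀)
      rw [if_neg h, if_neg hne]
  simp only [this]
  simp [Finset.sum_ite_eq']

/-- in Reduction 1 for 2-approval (with `p'ᵢ = x_{i₁} ≻ y_{i₂} ≻ z_{i₃} ≻ d₁ ≻
C⃗'ᵢ`, `c` preceding `w` in `C⃗'ᵢ`, `pᵢ` the partial chain obtained by deleting `z_{i₃}` and
`d₁`, and `Q` a total profile with `s(P'∪Q, x) = λ+1`, `s(P'∪Q, y) = λ+1`,
`s(P'∪Q, z) = λ−1`, `s(P'∪Q, d₁) = λ−q`, `s(P'∪Q, w) < λ` where `λ = s(P'∪Q, c)`),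
the distinguished candidate `c` is a possible winner of `P ∪ Q` under 2-approval
iff the 3DM instance is positive. -/
theorem stmt4 (q t : ℕ) (hq : 1 ≤ q)
    (S : Fin t → Fin q × Fin q × Fin q)
    (p' : Fin t → (Cand1 q ≃ Fin (3 * q + 3)))
    (hx : ∀ i, (p' i (Cand1.x (S i).1)).val = 0)
    (hy : ∀ i, (p' i (Cand1.y (S i).2.1)).val = 1)
    (hz : ∀ i, (p' i (Cand1.z (S i).2.2)).val = 2)
    (hd : ∀ i, (p' i Cand1.d1).val = 3)
    (hcw : ∀ i, p' i Cand1.c < p' i Cand1.w)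
    (Q : List (Cand1 q ≃ Fin (3 * q + 3)))
    (lam : ℕ)
    (hlam : score (kApproval (3 * q + 3) 2) (List.ofFn p' ++ Q) Cand1.c = lam)
    (hX : ∀ ix : Fin q,
      score (kApproval (3 * q + 3) 2) (List.ofFn p' ++ Q) (Cand1.x ix) = lam + 1)
    (hY : ∀ iy : Fin q,
      score (kApproval (3 * q + 3) 2) (List.ofFn p' ++ Q) (Cand1.y iy) = lam + 1)
    (hZ : ∀ iz : Fin q,
      score (kApproval (3 * q + 3) 2) (List.ofFn p' ++ Q) (Cand1.z iz) + 1 = lam)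
    (hD : score (kApproval (3 * q + 3) 2) (List.ofFn p' ++ Q) Cand1.d1 + q = lam)
    (hW : score (kApproval (3 * q + 3) 2) (List.ofFn p' ++ Q) Cand1.w < lam) :
    (∃ T : Fin t → (Cand1 q ≃ Fin (3 * q + 3)),
      (∀ (i : Fin t) (u v : Cand1 q),
        u ≠ Cand1.z (S i).2.2 → u ≠ Cand1.d1 →
        v ≠ Cand1.z (S i).2.2 → v ≠ Cand1.d1 →
        p' i u < p' i v → T i u < T i v) ∧
      ∀ c', score (kApproval (3 * q + 3) 2) (List.ofFn T ++ Q) c' ≤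
            score (kApproval (3 * q + 3) 2) (List.ofFn T ++ Q) Cand1.c) ↔
    (∃ K : Finset (Fin t), K.card = q ∧
      ∀ i ∈ K, ∀ j ∈ K, i ≠ j →
        (S i).1 ≠ (S j).1 ∧ (S i).2.1 ≠ (S j).2.1 ∧ (S i).2.2 ≠ (S j).2.2) := by
  have hge4 : ∀ (i : Fin t) (u : Cand1 q), u ≠ Cand1.x (S i).1 → u ≠ Cand1.y (S i).2.1 →
      u ≠ Cand1.z (S i).2.2 → u ≠ Cand1.d1 → 4 ≤ (p' i u).val :=
    fun i u h1 h2 h3 h4 => pval_ge_four (p' i) (hx i) (hy i) (hz i) (hd i) h1 h2 h3 h4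
  have hsP : ∀ u, score (kApproval (3 * q + 3) 2) (List.ofFn p' ++ Q) u
      = (∑ i, kApproval (3 * q + 3) 2 (p' i u)) + score (kApproval (3 * q + 3) 2) Q u :=
    fun u => score_decomp _ p' Q u
  -- the score of c in Q
  have hqc : score (kApproval (3 * q + 3) 2) Q Cand1.c = lam := by
    have h := hlam
    rw [hsP, Finset.sum_eq_zero (fun i _ => kApp_of_ge
      (le_trans (by omega) (hge4 i Cand1.c nofun nofun nofun nofun))), zero_add] at h
    exact h
  -- the score of x' in P' ∪ Q decomposed
  have hNx : ∀ x' : Fin q, (∑ i, if (S i).1 = x' then (1:ℕ) else 0)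
      + score (kApproval (3 * q + 3) 2) Q (Cand1.x x') = lam + 1 := by
    intro x'
    have h := hX x'
    have heq : (∑ i, kApproval (3 * q + 3) 2 (p' i (Cand1.x x')))
        = ∑ i, if (S i).1 = x' then (1:ℕ) else 0 := by
      refine Finset.sum_congr rfl fun i _ => ?_
      by_cases hc : (S i).1 = x'
      · rw [if_pos hc]
        have hval : (p' i (Cand1.x x')).val = 0 := by rw [← hc]; exact hx i
        exact kApp_of_lt (by omega)
      · rw [if_neg hc]
        exact kApp_of_ge (le_trans (by omega)
          (hge4 i _ (fun hh => hc (cx_inj hh).symm) nofun nofun nofun))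
    rw [hsP, heq] at h
    exact h
  have hNy : ∀ y' : Fin q, (∑ i, if (S i).2.1 = y' then (1:ℕ) else 0)
      + score (kApproval (3 * q + 3) 2) Q (Cand1.y y') = lam + 1 := by
    intro y'
    have h := hY y'
    have heq : (∑ i, kApproval (3 * q + 3) 2 (p' i (Cand1.y y')))
        = ∑ i, if (S i).2.1 = y' then (1:ℕ) else 0 := by
      refine Finset.sum_congr rfl fun i _ => ?_
      by_cases hc : (S i).2.1 = y'
      · rw [if_pos hc]
        have hval : (p' i (Cand1.y y')).val = 1 := by rw [← hc]; exact hy i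
        exact kApp_of_lt (by omega)
      · rw [if_neg hc]
        exact kApp_of_ge (le_trans (by omega)
          (hge4 i _ nofun (fun hh => hc (cy_inj hh).symm) nofun nofun))
    rw [hsP, heq] at h
    exact h
  have hqz : ∀ z' : Fin q, score (kApproval (3 * q + 3) 2) Q (Cand1.z z') + 1 = lam := by
    intro z'
    have h := hZ z'
    have heq : (∑ i, kApproval (3 * q + 3) 2 (p' i (Cand1.z z'))) = 0 := by
      refine Finset.sum_eq_zero fun i _ => ?_
      by_cases hc : (S i).2.2 = z'
      · have hval : (p' i (Cand1.z z')).val = 2 := by rw [← hc]; exact hz i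
        exact kApp_of_ge (by omega)
      · exact kApp_of_ge (le_trans (by omega)
          (hge4 i _ nofun nofun (fun hh => hc (cz_inj hh).symm) nofun))
    rw [hsP, heq, zero_add] at h
    exact h
  have hqd : score (kApproval (3 * q + 3) 2) Q Cand1.d1 + q = lam := by
    have h := hD
    rw [hsP, Finset.sum_eq_zero (fun i (_ : i ∈ Finset.univ) =>
      kApp_of_ge (by rw [hd i]; omega)), zero_add] at h
    exact h
  have hqw : score (kApproval (3 * q + 3) 2) Q Cand1.w < lam := by
    have h := hW
    rw [hsP, Finset.sum_eq_zero (fun i _ => kApp_of_ge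
      (le_trans (by omega) (hge4 i Cand1.w nofun nofun nofun nofun))), zero_add] at h
    exact h
  constructor
  · rintro ⟨T, hT, hwin⟩
    have hsT : ∀ u, score (kApproval (3 * q + 3) 2) (List.ofFn T ++ Q) u
        = (∑ i, kApproval (3 * q + 3) 2 (T i u)) + score (kApproval (3 * q + 3) 2) Q u :=
      fun u => score_decomp _ T Q u
    have hzero : ∀ (i : Fin t) (u : Cand1 q), u ≠ Cand1.x (S i).1 → u ≠ Cand1.y (S i).2.1 →
        u ≠ Cand1.z (S i).2.2 → u ≠ Cand1.d1 → kApproval (3 * q + 3) 2 (T i u) = 0 := by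
      intro i u h1 h2 h3 h4
      have hxu : T i (Cand1.x (S i).1) < T i u := by
        refine hT i (Cand1.x (S i).1) u nofun nofun h3 h4 ?_
        rw [Fin.lt_def, hx i]
        have := hge4 i u h1 h2 h3 h4; omega
      have hyu : T i (Cand1.y (S i).2.1) < T i u := by
        refine hT i (Cand1.y (S i).2.1) u nofun nofun h3 h4 ?_
        rw [Fin.lt_def, hy i]
        have := hge4 i u h1 h2 h3 h4; omega
      have hne : T i (Cand1.x (S i).1) ≠ T i (Cand1.y (S i).2.1) :=
        fun h => absurd ((T i).injective h) nofun
      exact kApp_of_ge (two_below hne hxu hyu)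
    have hBA : ∀ i : Fin t, kApproval (3 * q + 3) 2 (T i (Cand1.y (S i).2.1)) ≤
        kApproval (3 * q + 3) 2 (T i (Cand1.x (S i).1)) := by
      intro i
      have hlt : T i (Cand1.x (S i).1) < T i (Cand1.y (S i).2.1) := by
        refine hT i (Cand1.x (S i).1) (Cand1.y (S i).2.1) nofun nofun nofun nofun ?_
        rw [Fin.lt_def, hx i, hy i]; omega
      rw [Fin.lt_def] at hlt
      unfold kApproval; split_ifs <;> omega
    have habzd : ∀ i : Fin t,
        kApproval (3 * q + 3) 2 (T i (Cand1.x (S i).1))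
        + kApproval (3 * q + 3) 2 (T i (Cand1.y (S i).2.1))
        + kApproval (3 * q + 3) 2 (T i (Cand1.z (S i).2.2))
        + kApproval (3 * q + 3) 2 (T i Cand1.d1) = 2 := by
      intro i
      have h2 := sum_two q (T i)
      rw [← Finset.sum_subset (Finset.subset_univ
        ({Cand1.x (S i).1, Cand1.y (S i).2.1, Cand1.z (S i).2.2, Cand1.d1} : Finset (Cand1 q)))
        (fun u _ hu => by
          simp only [Finset.mem_insert, Finset.mem_singleton, not_or] at hu
          exact hzero i u hu.1 hu.2.1 hu.2.2.1 hu.2.2.2)] at h2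
      rw [Finset.sum_insert (by simp), Finset.sum_insert (by simp),
        Finset.sum_pair (by simp : (Cand1.z (S i).2.2 : Cand1 q) ≠ Cand1.d1)] at h2
      omega
    have hgTc : (∑ i, kApproval (3 * q + 3) 2 (T i Cand1.c)) = 0 :=
      Finset.sum_eq_zero fun i _ => hzero i Cand1.c nofun nofun nofun nofun
    have hwin' : ∀ u, (∑ i, kApproval (3 * q + 3) 2 (T i u))
        + score (kApproval (3 * q + 3) 2) Q u ≤ lam := by
      intro u
      have h := hwin u
      rw [hsT u, hsT Cand1.c, hgTc, zero_add, hqc] at h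
      exact h
    -- existence of a vote where x' loses its point
    have hAx : ∀ x' : Fin q, ∃ i, (S i).1 = x'
        ∧ kApproval (3 * q + 3) 2 (T i (Cand1.x (S i).1)) = 0 := by
      intro x'
      by_contra hcon
      push_neg at hcon
      have heq : (∑ i, kApproval (3 * q + 3) 2 (T i (Cand1.x x')))
          = ∑ i, if (S i).1 = x' then (1:ℕ) else 0 := by
        refine Finset.sum_congr rfl fun i _ => ?_
        by_cases hc : (S i).1 = x'
        · rw [if_pos hc]
          have h1 := hcon i hc
          have h2 := kApp_le_one (T i (Cand1.x (S i).1))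
          have h3 : kApproval (3 * q + 3) 2 (T i (Cand1.x (S i).1)) = 1 := by omega
          rw [← hc]; exact h3
        · rw [if_neg hc]
          exact hzero i _ (fun hh => hc (cx_inj hh).symm) nofun nofun nofun
      have h1 := hwin' (Cand1.x x')
      rw [heq] at h1
      have h2 := hNx x'
      omega
    have hBy : ∀ y' : Fin q, ∃ i, (S i).2.1 = y'
        ∧ kApproval (3 * q + 3) 2 (T i (Cand1.y (S i).2.1)) = 0 := by
      intro y'
      by_contra hcon
      push_neg at hcon
      have heq : (∑ i, kApproval (3 * q + 3) 2 (T i (Cand1.y y')))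
          = ∑ i, if (S i).2.1 = y' then (1:ℕ) else 0 := by
        refine Finset.sum_congr rfl fun i _ => ?_
        by_cases hc : (S i).2.1 = y'
        · rw [if_pos hc]
          have h1 := hcon i hc
          have h2 := kApp_le_one (T i (Cand1.y (S i).2.1))
          have h3 : kApproval (3 * q + 3) 2 (T i (Cand1.y (S i).2.1)) = 1 := by omega
          rw [← hc]; exact h3
        · rw [if_neg hc]
          exact hzero i _ nofun (fun hh => hc (cy_inj hh).symm) nofun nofun
      have h1 := hwin' (Cand1.y y')
      rw [heq] at h1
      have h2 := hNy y'
      omega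
    -- z and d1 budgets
    have hgz_eq : ∀ z' : Fin q, (∑ i, kApproval (3 * q + 3) 2 (T i (Cand1.z z')))
        = ∑ i, if (S i).2.2 = z'
            then kApproval (3 * q + 3) 2 (T i (Cand1.z (S i).2.2)) else 0 := by
      refine fun z' => Finset.sum_congr rfl fun i _ => ?_
      by_cases hc : (S i).2.2 = z'
      · rw [if_pos hc, hc]
      · rw [if_neg hc]; exact hzero i _ nofun nofun (fun hh => hc (cz_inj hh).symm) nofun
    have hgz_le : ∀ z' : Fin q, (∑ i, if (S i).2.2 = z'
        then kApproval (3 * q + 3) 2 (T i (Cand1.z (S i).2.2)) else 0) ≤ 1 := by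
      intro z'
      have h1 := hwin' (Cand1.z z')
      rw [hgz_eq z'] at h1
      have h2 := hqz z'
      omega
    have hgd_le : (∑ i, kApproval (3 * q + 3) 2 (T i Cand1.d1)) ≤ q := by
      have h1 := hwin' Cand1.d1
      omega
    -- define K
    set K : Finset (Fin t) := Finset.univ.filter
      (fun i => kApproval (3 * q + 3) 2 (T i (Cand1.x (S i).1)) = 0) with hKdef
    have hKmem : ∀ i, i ∈ K ↔ kApproval (3 * q + 3) 2 (T i (Cand1.x (S i).1)) = 0 := by
      intro i; simp [hKdef]
    have hKZD : ∀ i ∈ K, kApproval (3 * q + 3) 2 (T i (Cand1.z (S i).2.2)) = 1 ∧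
        kApproval (3 * q + 3) 2 (T i Cand1.d1) = 1 := by
      intro i hi
      have hA := (hKmem i).mp hi
      have hB := hBA i
      have hS := habzd i
      have h1 := kApp_le_one (T i (Cand1.z (S i).2.2))
      have h2 := kApp_le_one (T i Cand1.d1)
      omega
    have hcard_le : K.card ≤ q := by
      have h1 : ∑ i ∈ K, kApproval (3 * q + 3) 2 (T i Cand1.d1) = ∑ _i ∈ K, 1 :=
        Finset.sum_congr rfl fun i hi => (hKZD i hi).2
      have h2 : ∑ i ∈ K, kApproval (3 * q + 3) 2 (T i Cand1.d1)
          ≤ ∑ i, kApproval (3 * q + 3) 2 (T i Cand1.d1) :=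
        Finset.sum_le_sum_of_subset (Finset.subset_univ K)
      have h3 : (∑ _i ∈ K, (1:ℕ)) = K.card := by simp
      omega
    have hsurj_fst : ∀ x' : Fin q, ∃ i ∈ K, (S i).1 = x' := by
      intro x'
      obtain ⟨i, h1, h2⟩ := hAx x'
      exact ⟨i, (hKmem i).mpr h2, h1⟩
    have himg_fst : K.image (fun i => (S i).1) = Finset.univ := by
      apply Finset.eq_univ_of_forall
      intro x'
      obtain ⟨i, hi, he⟩ := hsurj_fst x'
      exact Finset.mem_image.mpr ⟨i, hi, he⟩
    have hcard_ge : q ≤ K.card := by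
      have h := Finset.card_image_le (s := K) (f := fun i => (S i).1)
      rw [himg_fst] at h
      simpa using h
    have hKq : K.card = q := le_antisymm hcard_le hcard_ge
    have hinj_fst : Set.InjOn (fun i => (S i).1) K := by
      apply Finset.injOn_of_card_image_eq
      rw [himg_fst, hKq]; simp
    have hinj_trd : ∀ i ∈ K, ∀ j ∈ K, i ≠ j → (S i).2.2 ≠ (S j).2.2 := by
      intro i hi j hj hij hzz
      have hle : (∑ k ∈ ({i, j} : Finset (Fin t)), if (S k).2.2 = (S i).2.2
            then kApproval (3 * q + 3) 2 (T k (Cand1.z (S k).2.2)) else 0)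
          ≤ ∑ k, if (S k).2.2 = (S i).2.2
            then kApproval (3 * q + 3) 2 (T k (Cand1.z (S k).2.2)) else 0 :=
        Finset.sum_le_sum_of_subset (Finset.subset_univ _)
      rw [Finset.sum_pair hij, if_pos rfl, if_pos hzz.symm,
        (hKZD i hi).1, (hKZD j hj).1] at hle
      have h3 := hgz_le (S i).2.2
      omega
    -- total budget argument
    have hZtot : (∑ i, kApproval (3 * q + 3) 2 (T i (Cand1.z (S i).2.2))) ≤ q := by
      rw [← Finset.sum_fiberwise Finset.univ (fun i => (S i).2.2)
        (fun i => kApproval (3 * q + 3) 2 (T i (Cand1.z (S i).2.2)))]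
      have hle : ∀ z' : Fin q, (∑ i ∈ Finset.univ.filter (fun i => (S i).2.2 = z'),
          kApproval (3 * q + 3) 2 (T i (Cand1.z (S i).2.2))) ≤ 1 := by
        intro z'
        rw [Finset.sum_filter]
        exact hgz_le z'
      calc (∑ z' : Fin q, ∑ i ∈ Finset.univ.filter (fun i => (S i).2.2 = z'),
          kApproval (3 * q + 3) 2 (T i (Cand1.z (S i).2.2)))
          ≤ ∑ _z' : Fin q, 1 := Finset.sum_le_sum (fun z' _ => hle z')
        _ = q := by simp
    have hKsum : ∑ i ∈ K, (kApproval (3 * q + 3) 2 (T i (Cand1.z (S i).2.2))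
        + kApproval (3 * q + 3) 2 (T i Cand1.d1)) = 2 * q := by
      rw [Finset.sum_congr rfl (fun i hi => by rw [(hKZD i hi).1, (hKZD i hi).2]),
        Finset.sum_const, hKq, smul_eq_mul]
      omega
    have hout : ∀ i, i ∉ K → kApproval (3 * q + 3) 2 (T i (Cand1.z (S i).2.2)) = 0 ∧
        kApproval (3 * q + 3) 2 (T i Cand1.d1) = 0 := by
      intro i hi
      have hsplit := Finset.sum_add_sum_compl K (fun i =>
        kApproval (3 * q + 3) 2 (T i (Cand1.z (S i).2.2))
        + kApproval (3 * q + 3) 2 (T i Cand1.d1))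
      have htot : (∑ i, (kApproval (3 * q + 3) 2 (T i (Cand1.z (S i).2.2))
          + kApproval (3 * q + 3) 2 (T i Cand1.d1))) ≤ 2 * q := by
        rw [Finset.sum_add_distrib]
        omega
      have hcompl : ∑ j ∈ Kᶜ, (kApproval (3 * q + 3) 2 (T j (Cand1.z (S j).2.2))
          + kApproval (3 * q + 3) 2 (T j Cand1.d1)) = 0 := by omega
      have h := Finset.sum_eq_zero_iff.mp hcompl i (Finset.mem_compl.mpr hi)
      omega
    have hBout : ∀ i, i ∉ K → kApproval (3 * q + 3) 2 (T i (Cand1.y (S i).2.1)) = 1 := by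
      intro i hi
      have h0 := hout i hi
      have hS := habzd i
      have h1 := kApp_le_one (T i (Cand1.x (S i).1))
      have h2 := kApp_le_one (T i (Cand1.y (S i).2.1))
      omega
    have hsurj_snd : ∀ y' : Fin q, ∃ i ∈ K, (S i).2.1 = y' := by
      intro y'
      obtain ⟨i, h1, h2⟩ := hBy y'
      refine ⟨i, ?_, h1⟩
      by_contra hnot
      rw [hBout i hnot] at h2
      omega
    have himg_snd : K.image (fun i => (S i).2.1) = Finset.univ := by
      apply Finset.eq_univ_of_forall
      intro y'
      obtain ⟨i, hi, he⟩ := hsurj_snd y'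
      exact Finset.mem_image.mpr ⟨i, hi, he⟩
    have hinj_snd : Set.InjOn (fun i => (S i).2.1) K := by
      apply Finset.injOn_of_card_image_eq
      rw [himg_snd, hKq]; simp
    exact ⟨K, hKq, fun i hi j hj hij =>
      ⟨fun h => hij (hinj_fst hi hj h), fun h => hij (hinj_snd hi hj h),
        hinj_trd i hi j hj hij⟩⟩
  · rintro ⟨K, hKq, hKdist⟩
    have hinj_fst : Set.InjOn (fun i => (S i).1) ↑K := by
      intro i hi j hj h
      by_contra hij
      exact (hKdist i (Finset.mem_coe.mp hi) j (Finset.mem_coe.mp hj) hij).1 h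
    have hinj_snd : Set.InjOn (fun i => (S i).2.1) ↑K := by
      intro i hi j hj h
      by_contra hij
      exact (hKdist i (Finset.mem_coe.mp hi) j (Finset.mem_coe.mp hj) hij).2.1 h
    have hinj_trd : Set.InjOn (fun i => (S i).2.2) ↑K := by
      intro i hi j hj h
      by_contra hij
      exact (hKdist i (Finset.mem_coe.mp hi) j (Finset.mem_coe.mp hj) hij).2.2 h
    have himg : ∀ (f : Fin t → Fin q), Set.InjOn f ↑K → ∀ a : Fin q, ∃ i ∈ K, f i = a := by
      intro f hf a
      have h1 : (K.image f).card = K.card := Finset.card_image_of_injOn hf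
      have h2 : K.image f = Finset.univ := Finset.eq_univ_of_card _ (by rw [h1, hKq]; simp)
      have h3 : a ∈ K.image f := h2 ▸ Finset.mem_univ a
      obtain ⟨i, hi, he⟩ := Finset.mem_image.mp h3
      exact ⟨i, hi, he⟩
    refine ⟨fun i => if i ∈ K then (p' i).trans (sig q hq) else p' i, ?_, ?_⟩
    · intro i u v hu1 hu2 hv1 hv2 hlt
      show (if i ∈ K then (p' i).trans (sig q hq) else p' i) u
        < (if i ∈ K then (p' i).trans (sig q hq) else p' i) v
      by_cases hi : i ∈ K
      · rw [if_pos hi]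
        show sig q hq (p' i u) < sig q hq (p' i v)
        refine sig_mono q hq ?_ ?_ ?_ ?_ hlt
        · exact fun h => hu1 ((p' i).injective (Fin.ext (h.trans (hz i).symm)))
        · exact fun h => hu2 ((p' i).injective (Fin.ext (h.trans (hd i).symm)))
        · exact fun h => hv1 ((p' i).injective (Fin.ext (h.trans (hz i).symm)))
        · exact fun h => hv2 ((p' i).injective (Fin.ext (h.trans (hd i).symm)))
      · rw [if_neg hi]; exact hlt
    · intro c'
      have hTval : ∀ (i : Fin t) (u : Cand1 q),
          kApproval (3 * q + 3) 2 ((if i ∈ K then (p' i).trans (sig q hq) else p' i) u)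
          = if i ∈ K then (if (p' i u).val = 2 ∨ (p' i u).val = 3 then 1 else 0)
            else (if (p' i u).val < 2 then 1 else 0) := by
        intro i u
        by_cases hi : i ∈ K
        · rw [if_pos hi, if_pos hi]
          exact kApp_sig q hq (p' i u)
        · rw [if_neg hi, if_neg hi]
          rfl
      have hsT : ∀ u : Cand1 q, score (kApproval (3 * q + 3) 2)
          (List.ofFn (fun i => if i ∈ K then (p' i).trans (sig q hq) else p' i) ++ Q) u
          = (∑ i, (if i ∈ K then (if (p' i u).val = 2 ∨ (p' i u).val = 3 then (1:ℕ) else 0)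
            else (if (p' i u).val < 2 then 1 else 0)))
            + score (kApproval (3 * q + 3) 2) Q u := by
        intro u
        rw [score_decomp]
        exact congrArg (fun s => s + score (kApproval (3 * q + 3) 2) Q u)
          (Finset.sum_congr rfl fun i _ => hTval i u)
      have h0 : ∀ u : Cand1 q, u ≠ Cand1.c → u = Cand1.c ∨ True := fun _ _ => Or.inr trivial
      have hzc : (∑ i, (if i ∈ K then
            (if (p' i Cand1.c).val = 2 ∨ (p' i Cand1.c).val = 3 then (1:ℕ) else 0)
            else (if (p' i Cand1.c).val < 2 then 1 else 0))) = 0 := by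
        refine Finset.sum_eq_zero fun i _ => ?_
        have h4 := hge4 i Cand1.c nofun nofun nofun nofun
        split_ifs <;> omega
      rw [hsT c', hsT Cand1.c, hzc, zero_add, hqc]
      cases c' with
      | c =>
        rw [hzc]
        omega
      | w =>
        have hzw : (∑ i, (if i ∈ K then
              (if (p' i Cand1.w).val = 2 ∨ (p' i Cand1.w).val = 3 then (1:ℕ) else 0)
              else (if (p' i Cand1.w).val < 2 then 1 else 0))) = 0 := by
          refine Finset.sum_eq_zero fun i _ => ?_
          have h4 := hge4 i Cand1.w nofun nofun nofun nofun
          split_ifs <;> omega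
        rw [hzw]
        omega
      | x x' =>
        have hux : ∀ i : Fin t, (if i ∈ K then
              (if (p' i (Cand1.x x')).val = 2 ∨ (p' i (Cand1.x x')).val = 3 then (1:ℕ) else 0)
              else (if (p' i (Cand1.x x')).val < 2 then 1 else 0))
            = if ((S i).1 = x' ∧ i ∉ K) then 1 else 0 := by
          intro i
          by_cases hc : (S i).1 = x'
          · have hval : (p' i (Cand1.x x')).val = 0 := by rw [← hc]; exact hx i
            rw [hval]
            by_cases hi : i ∈ K <;> simp [hi, hc]
          · have hval := hge4 i (Cand1.x x') (fun hh => hc (cx_inj hh).symm) nofun nofun nofun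
            by_cases hi : i ∈ K <;> simp only [hi, hc, if_true, if_false, false_and,
              not_true, not_false_iff, true_and, and_true, and_false] <;> split_ifs <;> omega
        rw [Finset.sum_congr rfl (fun i _ => hux i)]
        have h1 : (∑ i, if ((S i).1 = x' ∧ i ∈ K) then (1:ℕ) else 0) = 1 := by
          obtain ⟨i₀, hi₀, he₀⟩ := himg (fun i => (S i).1) hinj_fst x'
          refine sum_indicator_unique _ i₀ ⟨he₀, hi₀⟩ ?_
          rintro j ⟨hj1, hj2⟩
          exact hinj_fst (Finset.mem_coe.mpr hj2) (Finset.mem_coe.mpr hi₀) (hj1.trans he₀.symm)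
        have h2 : (∑ i, if (S i).1 = x' then (1:ℕ) else 0)
            = (∑ i, if ((S i).1 = x' ∧ i ∈ K) then (1:ℕ) else 0)
            + (∑ i, if ((S i).1 = x' ∧ i ∉ K) then (1:ℕ) else 0) := by
          rw [← Finset.sum_add_distrib]
          refine Finset.sum_congr rfl fun i _ => ?_
          by_cases hc : (S i).1 = x' <;> by_cases hi : i ∈ K <;> simp [hc, hi]
        have h3 := hNx x'
        omega
      | y y' =>
        have hux : ∀ i : Fin t, (if i ∈ K then
              (if (p' i (Cand1.y y')).val = 2 ∨ (p' i (Cand1.y y')).val = 3 then (1:ℕ) else 0)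
              else (if (p' i (Cand1.y y')).val < 2 then 1 else 0))
            = if ((S i).2.1 = y' ∧ i ∉ K) then 1 else 0 := by
          intro i
          by_cases hc : (S i).2.1 = y'
          · have hval : (p' i (Cand1.y y')).val = 1 := by rw [← hc]; exact hy i
            rw [hval]
            by_cases hi : i ∈ K <;> simp [hi, hc]
          · have hval := hge4 i (Cand1.y y') nofun (fun hh => hc (cy_inj hh).symm) nofun nofun
            by_cases hi : i ∈ K <;> simp only [hi, hc, if_true, if_false, false_and,
              not_true, not_false_iff, true_and, and_true, and_false] <;> split_ifs <;> omega
        rw [Finset.sum_congr rfl (fun i _ => hux i)]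
        have h1 : (∑ i, if ((S i).2.1 = y' ∧ i ∈ K) then (1:ℕ) else 0) = 1 := by
          obtain ⟨i₀, hi₀, he₀⟩ := himg (fun i => (S i).2.1) hinj_snd y'
          refine sum_indicator_unique _ i₀ ⟨he₀, hi₀⟩ ?_
          rintro j ⟨hj1, hj2⟩
          exact hinj_snd (Finset.mem_coe.mpr hj2) (Finset.mem_coe.mpr hi₀) (hj1.trans he₀.symm)
        have h2 : (∑ i, if (S i).2.1 = y' then (1:ℕ) else 0)
            = (∑ i, if ((S i).2.1 = y' ∧ i ∈ K) then (1:ℕ) else 0)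
            + (∑ i, if ((S i).2.1 = y' ∧ i ∉ K) then (1:ℕ) else 0) := by
          rw [← Finset.sum_add_distrib]
          refine Finset.sum_congr rfl fun i _ => ?_
          by_cases hc : (S i).2.1 = y' <;> by_cases hi : i ∈ K <;> simp [hc, hi]
        have h3 := hNy y'
        omega
      | z z' =>
        have hux : ∀ i : Fin t, (if i ∈ K then
              (if (p' i (Cand1.z z')).val = 2 ∨ (p' i (Cand1.z z')).val = 3 then (1:ℕ) else 0)
              else (if (p' i (Cand1.z z')).val < 2 then 1 else 0))
            = if ((S i).2.2 = z' ∧ i ∈ K) then 1 else 0 := by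
          intro i
          by_cases hc : (S i).2.2 = z'
          · have hval : (p' i (Cand1.z z')).val = 2 := by rw [← hc]; exact hz i
            rw [hval]
            by_cases hi : i ∈ K <;> simp [hi, hc]
          · have hval := hge4 i (Cand1.z z') nofun nofun (fun hh => hc (cz_inj hh).symm) nofun
            by_cases hi : i ∈ K <;> simp only [hi, hc, if_true, if_false, false_and,
              not_true, not_false_iff, true_and, and_true, and_false] <;> split_ifs <;> omega
        rw [Finset.sum_congr rfl (fun i _ => hux i)]
        have h1 : (∑ i, if ((S i).2.2 = z' ∧ i ∈ K) then (1:ℕ) else 0) = 1 := by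
          obtain ⟨i₀, hi₀, he₀⟩ := himg (fun i => (S i).2.2) hinj_trd z'
          refine sum_indicator_unique _ i₀ ⟨he₀, hi₀⟩ ?_
          rintro j ⟨hj1, hj2⟩
          exact hinj_trd (Finset.mem_coe.mpr hj2) (Finset.mem_coe.mpr hi₀) (hj1.trans he₀.symm)
        have h3 := hqz z'
        omega
      | d1 =>
        have hux : ∀ i : Fin t, (if i ∈ K then
              (if (p' i Cand1.d1).val = 2 ∨ (p' i Cand1.d1).val = 3 then (1:ℕ) else 0)
              else (if (p' i Cand1.d1).val < 2 then 1 else 0))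
            = if i ∈ K then 1 else 0 := by
          intro i
          have hval := hd i
          rw [hval]
          by_cases hi : i ∈ K <;> simp [hi]
        rw [Finset.sum_congr rfl (fun i _ => hux i)]
        have h1 : (∑ i, if i ∈ K then (1:ℕ) else 0) = q := by
          rw [Finset.sum_ite_mem, Finset.univ_inter, Finset.sum_const, hKq, smul_eq_mul,
            mul_one]
        have h3 := hqd
        omega
end

section
/- With P, P', Q and the k-ones 2-valued scoring vector as in the construction from the 3DM instance (described in the context), the distinguished candidate c is a possible winner of the partial profile P ∪ Q under the scoring vector (1, …, 1, 0, …, 0) with k ones (2 ≤ k ≤ m − 2) if and only if the 3DM instance is positive. -/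
namespace Stmt5Aux

open Finset

lemma score_append {m : ℕ} {C : Type*} (s : Fin m → ℕ) (P Q : List (C ≃ Fin m)) (c : C) :
    score s (P ++ Q) c = score s P c + score s Q c := by
  simp [score]

lemma score_ofFn {m n : ℕ} {C : Type*} (s : Fin m → ℕ) (T : Fin n → (C ≃ Fin m)) (c : C) :
    score s (List.ofFn T) c = ∑ i, s (T i c) := by
  simp [score, List.map_ofFn, List.sum_ofFn, Function.comp]

lemma kApproval_le_one (m k : ℕ) (p : Fin m) : kApproval m k p ≤ 1 := by
  unfold kApproval; split <;> omega

lemma kApproval_pos (m k : ℕ) (p : Fin m) (h : p.val < k) : kApproval m k p = 1 := if_pos h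

lemma kApproval_zero (m k : ℕ) (p : Fin m) (h : k ≤ p.val) : kApproval m k p = 0 :=
  if_neg (by omega)

/-- `g` is strictly monotone on positions other than `k` and `k+1`. -/
def MonoOff (m k : ℕ) (g : Equiv.Perm (Fin m)) : Prop :=
  ∀ a b : Fin m, a.val ≠ k → a.val ≠ k + 1 → b.val ≠ k → b.val ≠ k + 1 → a < b → g a < g b

variable {m k : ℕ}

lemma monoOff_lt (hkm : k + 2 ≤ m) {g : Equiv.Perm (Fin m)} (hg : MonoOff m k g)
    (j : Fin m) (hj : j.val + 2 < k) : (g j).val < k := by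
  classical
  set B : Finset (Fin m) := (Finset.Ioi j).filter (fun p => p.val ≠ k ∧ p.val ≠ k + 1) with hB
  have h1 : B.card ≤ (Finset.Ioi (g j)).card := by
    apply Finset.card_le_card_of_injOn g
    · intro p hp
      rw [hB, Finset.mem_coe, Finset.mem_filter, Finset.mem_Ioi] at hp
      rw [Finset.mem_coe, Finset.mem_Ioi]
      exact hg j p (by omega) (by omega) hp.2.1 hp.2.2 hp.1
    · exact g.injective.injOn
  have h2 : (Finset.Ioi j).card ≤ B.card + 2 := by
    have hsplit : B.card + ((Finset.Ioi j).filter (fun p : Fin m => ¬(p.val ≠ k ∧ p.val ≠ k + 1))).card = (Finset.Ioi j).card := by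
      rw [hB]
      exact Finset.card_filter_add_card_filter_not
        (p := fun p : Fin m => p.val ≠ k ∧ p.val ≠ k + 1)
    have hsub : (Finset.Ioi j).filter (fun p : Fin m => ¬(p.val ≠ k ∧ p.val ≠ k + 1)) ⊆
        ({⟨k, by omega⟩, ⟨k+1, by omega⟩} : Finset (Fin m)) := by
      intro p hp
      rw [Finset.mem_filter] at hp
      simp only [Finset.mem_insert, Finset.mem_singleton]
      rcases not_and_or.mp hp.2 with h | h
      · left; apply Fin.ext; simpa using h
      · right; apply Fin.ext; simpa using h
    have hc2 := Finset.card_le_card hsub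
    have : ({⟨k, by omega⟩, ⟨k+1, by omega⟩} : Finset (Fin m)).card ≤ 2 := Finset.card_insert_le _ _ |>.trans (by simp)
    omega
  rw [Fin.card_Ioi] at h1 h2
  have := (g j).isLt
  have := j.isLt
  omega

lemma monoOff_ge (hkm : k + 2 ≤ m) {g : Equiv.Perm (Fin m)} (hg : MonoOff m k g)
    (j : Fin m) (hj : k + 2 ≤ j.val) : k ≤ (g j).val := by
  classical
  set B : Finset (Fin m) := (Finset.Iio j).filter (fun p => p.val ≠ k ∧ p.val ≠ k + 1) with hB
  have h1 : B.card ≤ (Finset.Iio (g j)).card := by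
    apply Finset.card_le_card_of_injOn g
    · intro p hp
      rw [hB, Finset.mem_coe, Finset.mem_filter, Finset.mem_Iio] at hp
      rw [Finset.mem_coe, Finset.mem_Iio]
      exact hg p j hp.2.1 hp.2.2 (by omega) (by omega) hp.1
    · exact g.injective.injOn
  have h2 : (Finset.Iio j).card ≤ B.card + 2 := by
    have hsplit : B.card + ((Finset.Iio j).filter (fun p : Fin m => ¬(p.val ≠ k ∧ p.val ≠ k + 1))).card = (Finset.Iio j).card := by
      rw [hB]
      exact Finset.card_filter_add_card_filter_not
        (p := fun p : Fin m => p.val ≠ k ∧ p.val ≠ k + 1)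
    have hsub : (Finset.Iio j).filter (fun p : Fin m => ¬(p.val ≠ k ∧ p.val ≠ k + 1)) ⊆
        ({⟨k, by omega⟩, ⟨k+1, by omega⟩} : Finset (Fin m)) := by
      intro p hp
      rw [Finset.mem_filter] at hp
      simp only [Finset.mem_insert, Finset.mem_singleton]
      rcases not_and_or.mp hp.2 with h | h
      · left; apply Fin.ext; simpa using h
      · right; apply Fin.ext; simpa using h
    have hc2 := Finset.card_le_card hsub
    have : ({⟨k, by omega⟩, ⟨k+1, by omega⟩} : Finset (Fin m)).card ≤ 2 := Finset.card_insert_le _ _ |>.trans (by simp)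
    omega
  rw [Fin.card_Iio] at h1 h2
  omega

lemma monoOff_sum2 (hk2 : 2 ≤ k) (hkm : k + 2 ≤ m) {g : Equiv.Perm (Fin m)} (hg : MonoOff m k g)
    (a b c d : Fin m) (ha : a.val + 2 = k) (hb : b.val + 1 = k) (hc : c.val = k) (hd : d.val = k + 1) :
    kApproval m k (g a) + kApproval m k (g b) + kApproval m k (g c) + kApproval m k (g d) = 2 := by
  classical
  set Top : Finset (Fin m) := univ.filter (fun p => (g p).val < k) with hTop
  have hcTop : Top.card = k := by
    have himg : Top.image g = univ.filter (fun p : Fin m => p.val < k) := by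
      ext y
      simp only [hTop, Finset.mem_image, Finset.mem_filter, Finset.mem_univ, true_and]
      constructor
      · rintro ⟨p, hp, rfl⟩; exact hp
      · intro hy; exact ⟨g.symm y, by simpa using hy, by simp⟩
    have h2 : (univ.filter (fun p : Fin m => p.val < k)).card = k := by
      have : univ.filter (fun p : Fin m => p.val < k) = Finset.Iio (⟨k, by omega⟩ : Fin m) := by
        ext p; simp [Finset.mem_Iio, Fin.lt_def]
      rw [this, Fin.card_Iio]
    rw [← Finset.card_image_of_injective Top g.injective, himg, h2]
  set A : Finset (Fin m) := univ.filter (fun p => p.val + 2 < k) with hA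
  have hcA : A.card = k - 2 := by
    have : A = Finset.Iio (⟨k - 2, by omega⟩ : Fin m) := by
      ext p; simp only [hA, Finset.mem_filter, Finset.mem_univ, true_and, Finset.mem_Iio, Fin.lt_def]
      omega
    rw [this, Fin.card_Iio]
  have hAT : A ⊆ Top := by
    intro p hp
    rw [hA, Finset.mem_filter] at hp
    rw [hTop, Finset.mem_filter]
    exact ⟨Finset.mem_univ _, monoOff_lt hkm hg p hp.2⟩
  have habcd : Top \ A = ({a, b, c, d} : Finset (Fin m)).filter (fun p => (g p).val < k) := by
    ext p
    simp only [Finset.mem_sdiff, hTop, hA, Finset.mem_filter, Finset.mem_univ, true_and,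
      Finset.mem_insert, Finset.mem_singleton]
    constructor
    · rintro ⟨h1, h2⟩
      refine ⟨?_, h1⟩
      have hlt : p.val < k + 2 := by
        by_contra hcon
        have := monoOff_ge hkm hg p (by omega)
        omega
      have : p.val = a.val ∨ p.val = b.val ∨ p.val = c.val ∨ p.val = d.val := by omega
      rcases this with h | h | h | h
      · exact Or.inl (Fin.ext h)
      · exact Or.inr (Or.inl (Fin.ext h))
      · exact Or.inr (Or.inr (Or.inl (Fin.ext h)))
      · exact Or.inr (Or.inr (Or.inr (Fin.ext h)))
    · rintro ⟨h1, h2⟩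
      refine ⟨h2, ?_⟩
      rcases h1 with rfl | rfl | rfl | rfl <;> omega
  have hcard2 : (({a, b, c, d} : Finset (Fin m)).filter (fun p => (g p).val < k)).card = 2 := by
    rw [← habcd, Finset.card_sdiff_of_subset hAT, hcTop, hcA]; omega
  have hab : a ≠ b := fun h => by rw [h] at ha; omega
  have hac : a ≠ c := fun h => by rw [h] at ha; omega
  have had : a ≠ d := fun h => by rw [h] at ha; omega
  have hbc : b ≠ c := fun h => by rw [h] at hb; omega
  have hbd : b ≠ d := fun h => by rw [h] at hb; omega
  have hcd : c ≠ d := fun h => by rw [h] at hc; omega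
  rw [Finset.card_filter] at hcard2
  rw [Finset.sum_insert (by simp [hab, hac, had]), Finset.sum_insert (by simp [hbc, hbd]),
    Finset.sum_insert (by simp [hcd]), Finset.sum_singleton] at hcard2
  simpa [kApproval, add_assoc] using hcard2

/-- Rotate the first `k+2` positions by 2 (so positions `k`, `k+1` move to the front). -/
def rot2 (m k : ℕ) (hkm : k + 2 ≤ m) : Equiv.Perm (Fin m) where
  toFun j := if j.val < k + 2 then
      ⟨(j.val + 2) % (k + 2), lt_of_lt_of_le (Nat.mod_lt _ (by omega)) hkm⟩ else j
  invFun j := if j.val < k + 2 then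
      ⟨(j.val + k) % (k + 2), lt_of_lt_of_le (Nat.mod_lt _ (by omega)) hkm⟩ else j
  left_inv j := by
    by_cases h : j.val < k + 2
    · simp only [h, if_pos, Nat.mod_lt, if_pos (Nat.mod_lt _ (by omega : 0 < k + 2))]
      apply Fin.ext
      show ((j.val + 2) % (k + 2) + k) % (k + 2) = j.val
      rw [Nat.mod_add_mod]
      have : j.val + 2 + k = j.val + (k + 2) := by omega
      rw [this, Nat.add_mod_right, Nat.mod_eq_of_lt h]
    · simp [h]
  right_inv j := by
    by_cases h : j.val < k + 2
    · simp only [h, if_pos, Nat.mod_lt, if_pos (Nat.mod_lt _ (by omega : 0 < k + 2))]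
      apply Fin.ext
      show ((j.val + k) % (k + 2) + 2) % (k + 2) = j.val
      rw [Nat.mod_add_mod]
      have : j.val + k + 2 = j.val + (k + 2) := by omega
      rw [this, Nat.add_mod_right, Nat.mod_eq_of_lt h]
    · simp [h]

lemma rot2_val (m k : ℕ) (hkm : k + 2 ≤ m) (j : Fin m) :
    ((rot2 m k hkm) j).val =
      if j.val < k then j.val + 2 else if j.val = k then 0
        else if j.val = k + 1 then 1 else j.val := by
  show (if j.val < k + 2 then _ else _ : Fin m).val = _
  by_cases h1 : j.val < k
  · rw [if_pos (by omega : j.val < k + 2), if_pos h1]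
    show (j.val + 2) % (k + 2) = j.val + 2
    exact Nat.mod_eq_of_lt (by omega)
  · by_cases h2 : j.val = k
    · rw [if_pos (by omega : j.val < k + 2), if_neg h1, if_pos h2]
      show (j.val + 2) % (k + 2) = 0
      rw [h2, Nat.mod_self]
    · by_cases h3 : j.val = k + 1
      · rw [if_pos (by omega : j.val < k + 2), if_neg h1, if_neg h2, if_pos h3]
        show (j.val + 2) % (k + 2) = 1
        rw [h3, show k + 1 + 2 = 1 + (k + 2) by omega, Nat.add_mod_right]
        exact Nat.mod_eq_of_lt (by omega)
      · rw [if_neg (by omega), if_neg h1, if_neg h2, if_neg h3]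

lemma card_filter_eq_one {α β : Type*} [DecidableEq α] [DecidableEq β] [Fintype β]
    (K : Finset α) (f : α → β) (hinj : Set.InjOn f K) (hcard : K.card = Fintype.card β)
    (j : β) : (K.filter fun i => f i = j).card = 1 := by
  have himg : K.image f = Finset.univ := by
    apply Finset.eq_univ_of_card
    rw [Finset.card_image_of_injOn hinj, hcard]
  have hne : 1 ≤ (K.filter fun i => f i = j).card := by
    have : j ∈ K.image f := himg ▸ Finset.mem_univ j
    rcases Finset.mem_image.mp this with ⟨i, hi, hij⟩
    exact Finset.card_pos.mpr ⟨i, Finset.mem_filter.mpr ⟨hi, hij⟩⟩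
  have hle : (K.filter fun i => f i = j).card ≤ 1 := by
    apply Finset.card_le_one.mpr
    intro i hi i' hi'
    rw [Finset.mem_filter] at hi hi'
    exact hinj hi.1 hi'.1 (hi.2.trans hi'.2.symm)
  omega

lemma sum_ite_card {α : Type*} [Fintype α] [DecidableEq α] (P : α → Prop) [DecidablePred P] :
    (∑ i, if P i then 1 else 0) = (Finset.univ.filter P).card :=
  (Finset.card_filter P Finset.univ).symm

end Stmt5Aux

/-- general 2-valued construction, with scoring vector `(1,…,1,0,…,0)` of
length `m = 3q+3` with `k` ones (`2 ≤ k ≤ m−2`).  In each `p'ᵢ = C⃗¹ᵢ ≻ x_{i₁} ≻ y_{i₂} ≻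
z_{i₃} ≻ d₁ ≻ C⃗²ᵢ` the candidate `x_{i₁}` is at (0-indexed) position `k−2`, `y_{i₂}` at
`k−1`, `z_{i₃}` at `k`, `d₁` at `k+1`, and `c` and `w` lie in `C²ᵢ` with `c` preceding `w`;
`pᵢ` is the partial chain obtained by deleting `z_{i₃}` and `d₁`.  With a total profile `Q`
whose scores satisfy the stated conditions relative to `λ = s(P'∪Q, c)`, the candidate `c`
is a possible winner of `P ∪ Q` iff the 3DM instance is positive. -/
theorem stmt5 (q t k : ℕ) (hq : 1 ≤ q) (hk2 : 2 ≤ k) (hkm : k + 2 ≤ 3 * q + 3)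
    (S : Fin t → Fin q × Fin q × Fin q)
    (p' : Fin t → (Cand1 q ≃ Fin (3 * q + 3)))
    (hx : ∀ i, (p' i (Cand1.x (S i).1)).val + 2 = k)
    (hy : ∀ i, (p' i (Cand1.y (S i).2.1)).val + 1 = k)
    (hz : ∀ i, (p' i (Cand1.z (S i).2.2)).val = k)
    (hd : ∀ i, (p' i Cand1.d1).val = k + 1)
    (hc2 : ∀ i, k + 2 ≤ (p' i Cand1.c).val)
    (hcw : ∀ i, p' i Cand1.c < p' i Cand1.w)
    (Q : List (Cand1 q ≃ Fin (3 * q + 3)))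
    (lam : ℕ)
    (hlam : score (kApproval (3 * q + 3) k) (List.ofFn p' ++ Q) Cand1.c = lam)
    (hX : ∀ ix : Fin q,
      score (kApproval (3 * q + 3) k) (List.ofFn p' ++ Q) (Cand1.x ix) = lam + 1)
    (hY : ∀ iy : Fin q,
      score (kApproval (3 * q + 3) k) (List.ofFn p' ++ Q) (Cand1.y iy) = lam + 1)
    (hZ : ∀ iz : Fin q,
      score (kApproval (3 * q + 3) k) (List.ofFn p' ++ Q) (Cand1.z iz) + 1 = lam)
    (hD : score (kApproval (3 * q + 3) k) (List.ofFn p' ++ Q) Cand1.d1 + q = lam)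
    (hW : score (kApproval (3 * q + 3) k) (List.ofFn p' ++ Q) Cand1.w < lam) :
    (∃ T : Fin t → (Cand1 q ≃ Fin (3 * q + 3)),
      (∀ (i : Fin t) (u v : Cand1 q),
        u ≠ Cand1.z (S i).2.2 → u ≠ Cand1.d1 →
        v ≠ Cand1.z (S i).2.2 → v ≠ Cand1.d1 →
        p' i u < p' i v → T i u < T i v) ∧
      ∀ c', score (kApproval (3 * q + 3) k) (List.ofFn T ++ Q) c' ≤
            score (kApproval (3 * q + 3) k) (List.ofFn T ++ Q) Cand1.c) ↔
    (∃ K : Finset (Fin t), K.card = q ∧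
      ∀ i ∈ K, ∀ j ∈ K, i ≠ j →
        (S i).1 ≠ (S j).1 ∧ (S i).2.1 ≠ (S j).2.1 ∧ (S i).2.2 ≠ (S j).2.2) := by
  classical
  simp only [Stmt5Aux.score_append, Stmt5Aux.score_ofFn] at hlam hX hY hZ hD hW
  have hnot4 : ∀ (i : Fin t) (u : Cand1 q), u ≠ Cand1.x (S i).1 → u ≠ Cand1.y (S i).2.1 →
      u ≠ Cand1.z (S i).2.2 → u ≠ Cand1.d1 →
      (p' i u).val + 2 < k ∨ k + 2 ≤ (p' i u).val := by
    intro i u h1 h2 h3 h4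
    have e1 : (p' i u).val ≠ (p' i (Cand1.x (S i).1)).val :=
      fun h => h1 ((p' i).injective (Fin.ext h))
    have e2 : (p' i u).val ≠ (p' i (Cand1.y (S i).2.1)).val :=
      fun h => h2 ((p' i).injective (Fin.ext h))
    have e3 : (p' i u).val ≠ (p' i (Cand1.z (S i).2.2)).val :=
      fun h => h3 ((p' i).injective (Fin.ext h))
    have e4 : (p' i u).val ≠ (p' i Cand1.d1).val :=
      fun h => h4 ((p' i).injective (Fin.ext h))
    have b1 := hx i; have b2 := hy i; have b3 := hz i; have b4 := hd i
    have b5 := (p' i u).isLt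
    omega
  constructor
  · -- possible winner → matching
    rintro ⟨T, hT, hsc⟩
    have hmono : ∀ i, Stmt5Aux.MonoOff (3 * q + 3) k ((p' i).symm.trans (T i)) := by
      intro i a b ha ha' hb hb' hab
      simp only [Equiv.trans_apply]
      have hua : (p' i).symm a ≠ Cand1.z (S i).2.2 := by
        intro h
        apply ha
        have h2 : a = p' i (Cand1.z (S i).2.2) := by rw [← h, Equiv.apply_symm_apply]
        rw [h2]; exact hz i
      have hua' : (p' i).symm a ≠ Cand1.d1 := by
        intro h
        apply ha'
        have h2 : a = p' i Cand1.d1 := by rw [← h, Equiv.apply_symm_apply]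
        rw [h2]; exact hd i
      have hub : (p' i).symm b ≠ Cand1.z (S i).2.2 := by
        intro h
        apply hb
        have h2 : b = p' i (Cand1.z (S i).2.2) := by rw [← h, Equiv.apply_symm_apply]
        rw [h2]; exact hz i
      have hub' : (p' i).symm b ≠ Cand1.d1 := by
        intro h
        apply hb'
        have h2 : b = p' i Cand1.d1 := by rw [← h, Equiv.apply_symm_apply]
        rw [h2]; exact hd i
      apply hT i _ _ hua hua' hub hub'
      rw [Equiv.apply_symm_apply, Equiv.apply_symm_apply]
      exact hab
    have hTg : ∀ (i : Fin t) (u : Cand1 q), ((p' i).symm.trans (T i)) (p' i u) = T i u := by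
      intro i u; simp
    have hsame : ∀ (i : Fin t) (u : Cand1 q), u ≠ Cand1.x (S i).1 → u ≠ Cand1.y (S i).2.1 →
        u ≠ Cand1.z (S i).2.2 → u ≠ Cand1.d1 →
        kApproval (3 * q + 3) k (T i u) = kApproval (3 * q + 3) k (p' i u) := by
      intro i u h1 h2 h3 h4
      rcases hnot4 i u h1 h2 h3 h4 with h | h
      · have hlt := Stmt5Aux.monoOff_lt hkm (hmono i) (p' i u) h
        rw [hTg] at hlt
        rw [Stmt5Aux.kApproval_pos _ _ _ hlt, Stmt5Aux.kApproval_pos _ _ _ (by omega)]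
      · have hge := Stmt5Aux.monoOff_ge hkm (hmono i) (p' i u) h
        rw [hTg] at hge
        rw [Stmt5Aux.kApproval_zero _ _ _ hge, Stmt5Aux.kApproval_zero _ _ _ (by omega)]
    have hsum2 : ∀ i, kApproval (3 * q + 3) k (T i (Cand1.x (S i).1))
        + kApproval (3 * q + 3) k (T i (Cand1.y (S i).2.1))
        + kApproval (3 * q + 3) k (T i (Cand1.z (S i).2.2))
        + kApproval (3 * q + 3) k (T i Cand1.d1) = 2 := by
      intro i
      have h := Stmt5Aux.monoOff_sum2 hk2 hkm (hmono i)
        (p' i (Cand1.x (S i).1)) (p' i (Cand1.y (S i).2.1)) (p' i (Cand1.z (S i).2.2))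
        (p' i Cand1.d1) (hx i) (hy i) (hz i) (hd i)
      simpa only [hTg] using h
    have hyx : ∀ i, kApproval (3 * q + 3) k (T i (Cand1.y (S i).2.1)) = 1 →
        kApproval (3 * q + 3) k (T i (Cand1.x (S i).1)) = 1 := by
      intro i hy1
      have hord : T i (Cand1.x (S i).1) < T i (Cand1.y (S i).2.1) := by
        apply hT i _ _ (fun h => by cases h) (fun h => by cases h)
          (fun h => by cases h) (fun h => by cases h)
        rw [Fin.lt_def]
        have b1 := hx i; have b2 := hy i; omega
      rw [Fin.lt_def] at hord
      unfold kApproval at hy1 ⊢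
      split at hy1
      · split
        · rfl
        · omega
      · omega
    -- rewrite the winner condition
    have hceq : ∀ i, kApproval (3 * q + 3) k (T i Cand1.c) = 0 := by
      intro i
      have hge := Stmt5Aux.monoOff_ge hkm (hmono i) (p' i Cand1.c) (hc2 i)
      rw [hTg] at hge
      exact Stmt5Aux.kApproval_zero _ _ _ hge
    have hpceq : ∀ i, kApproval (3 * q + 3) k (p' i Cand1.c) = 0 := by
      intro i
      exact Stmt5Aux.kApproval_zero _ _ _ (le_trans (by omega) (hc2 i))
    have hsc' : ∀ c', (∑ i, kApproval (3 * q + 3) k (T i c'))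
        + score (kApproval (3 * q + 3) k) Q c' ≤ lam := by
      intro c'
      have h := hsc c'
      simp only [Stmt5Aux.score_append, Stmt5Aux.score_ofFn] at h
      have h1 : (∑ i, kApproval (3 * q + 3) k (T i Cand1.c))
          = ∑ i, kApproval (3 * q + 3) k (p' i Cand1.c) := by
        rw [Finset.sum_congr rfl (fun i (_ : i ∈ Finset.univ) => hceq i),
          Finset.sum_congr rfl (fun i (_ : i ∈ Finset.univ) => hpceq i)]
      omega
    set K : Finset (Fin t) :=
      Finset.univ.filter (fun i : Fin t => kApproval (3 * q + 3) k (T i (Cand1.x (S i).1)) = 0)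
      with hK
    have hKmem : ∀ i, i ∈ K ↔ kApproval (3 * q + 3) k (T i (Cand1.x (S i).1)) = 0 := by
      intro i; rw [hK, Finset.mem_filter]; simp
    have hKzd : ∀ i ∈ K, kApproval (3 * q + 3) k (T i (Cand1.z (S i).2.2)) = 1
        ∧ kApproval (3 * q + 3) k (T i Cand1.d1) = 1 := by
      intro i hi
      have h0 := (hKmem i).mp hi
      have h1 : kApproval (3 * q + 3) k (T i (Cand1.y (S i).2.1)) = 0 := by
        by_contra hne
        have hle := Stmt5Aux.kApproval_le_one (3 * q + 3) k (T i (Cand1.y (S i).2.1))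
        have h1' : kApproval (3 * q + 3) k (T i (Cand1.y (S i).2.1)) = 1 := by omega
        have := hyx i h1'
        omega
      have h2 := hsum2 i
      have l1 := Stmt5Aux.kApproval_le_one (3 * q + 3) k (T i (Cand1.z (S i).2.2))
      have l2 := Stmt5Aux.kApproval_le_one (3 * q + 3) k (T i Cand1.d1)
      constructor <;> omega
    -- coverage of X
    have hxcov : ∀ j : Fin q, ∃ i, i ∈ K ∧ (S i).1 = j := by
      intro j
      have hlt : (∑ i, kApproval (3 * q + 3) k (T i (Cand1.x j)))
          < ∑ i, kApproval (3 * q + 3) k (p' i (Cand1.x j)) := by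
        have h1 := hsc' (Cand1.x j); have h2 := hX j; omega
      obtain ⟨i, _, hi⟩ := Finset.exists_lt_of_sum_lt hlt
      by_cases hcj : (S i).1 = j
      · refine ⟨i, ?_, hcj⟩
        rw [hKmem, hcj]
        have hle := Stmt5Aux.kApproval_le_one (3 * q + 3) k (p' i (Cand1.x j))
        omega
      · exfalso
        have heq := hsame i (Cand1.x j)
          (fun h => hcj (by injection h with h'; exact h'.symm))
          (fun h => by cases h) (fun h => by cases h)
          (fun h => by cases h)
        omega
    -- d1 sum bound
    have hdsum : (∑ i, kApproval (3 * q + 3) k (T i Cand1.d1)) ≤ q := by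
      have h1 := hsc' Cand1.d1
      have hD' := hD
      rw [Finset.sum_congr rfl (fun i (_ : i ∈ Finset.univ) =>
        Stmt5Aux.kApproval_zero (3 * q + 3) k (p' i Cand1.d1) (by rw [hd i]; omega)),
        Finset.sum_const_zero] at hD'
      omega
    have hKcard_le : K.card ≤ q := by
      calc K.card = ∑ _i ∈ K, 1 := by simp
        _ ≤ ∑ i ∈ K, kApproval (3 * q + 3) k (T i Cand1.d1) :=
            Finset.sum_le_sum (fun i hi => by have := (hKzd i hi).2; omega)
        _ ≤ ∑ i, kApproval (3 * q + 3) k (T i Cand1.d1) :=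
            Finset.sum_le_sum_of_subset (Finset.subset_univ K)
        _ ≤ q := hdsum
    have himgx : Finset.univ ⊆ K.image (fun i => (S i).1) := by
      intro j _
      obtain ⟨i, hi, hij⟩ := hxcov j
      exact Finset.mem_image.mpr ⟨i, hi, hij⟩
    have hcardx : q ≤ (K.image fun i => (S i).1).card := by
      have h := Finset.card_le_card himgx
      simpa using h
    have hKq : K.card = q :=
      le_antisymm hKcard_le (le_trans hcardx Finset.card_image_le)
    have hinjx : Set.InjOn (fun i => (S i).1) K := by
      apply Finset.injOn_of_card_image_eq
      have h := Finset.card_image_le (s := K) (f := fun i => (S i).1)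
      omega
    -- at most one z gain per element
    have hzle : ∀ j : Fin q, (Finset.univ.filter fun i =>
        (S i).2.2 = j ∧ kApproval (3 * q + 3) k (T i (Cand1.z j)) = 1).card ≤ 1 := by
      intro j
      have hterm : ∀ i : Fin t, kApproval (3 * q + 3) k (p' i (Cand1.z j))
          + (if (S i).2.2 = j ∧ kApproval (3 * q + 3) k (T i (Cand1.z j)) = 1 then 1 else 0)
          = kApproval (3 * q + 3) k (T i (Cand1.z j)) := by
        intro i
        by_cases hcj : (S i).2.2 = j
        · have hp0 : kApproval (3 * q + 3) k (p' i (Cand1.z j)) = 0 := by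
            apply Stmt5Aux.kApproval_zero
            rw [← hcj, hz i]
          have hle := Stmt5Aux.kApproval_le_one (3 * q + 3) k (T i (Cand1.z j))
          by_cases h1 : kApproval (3 * q + 3) k (T i (Cand1.z j)) = 1
          · rw [if_pos ⟨hcj, h1⟩, hp0, h1]
          · rw [if_neg (by tauto), hp0]
            omega
        · rw [if_neg (by tauto), add_zero]
          exact (hsame i (Cand1.z j) (fun h => by cases h)
            (fun h => by cases h)
            (fun h => hcj (by injection h with h'; exact h'.symm))
            (fun h => by cases h)).symm
      have hsum := Finset.sum_congr rfl (fun i (_ : i ∈ Finset.univ) => hterm i)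
      rw [Finset.sum_add_distrib, Stmt5Aux.sum_ite_card] at hsum
      have h1 := hsc' (Cand1.z j); have h2 := hZ j
      omega
    have hinjz : Set.InjOn (fun i => (S i).2.2) K := by
      intro i hi i' hi' h
      simp only at h
      by_contra hne
      have hj := hzle ((S i).2.2)
      have m1 : i ∈ Finset.univ.filter (fun i0 => (S i0).2.2 = (S i).2.2
          ∧ kApproval (3 * q + 3) k (T i0 (Cand1.z (S i).2.2)) = 1) := by
        rw [Finset.mem_filter]
        exact ⟨Finset.mem_univ _, rfl, (hKzd i (Finset.mem_coe.mp hi)).1⟩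
      have m2 : i' ∈ Finset.univ.filter (fun i0 => (S i0).2.2 = (S i).2.2
          ∧ kApproval (3 * q + 3) k (T i0 (Cand1.z (S i).2.2)) = 1) := by
        rw [Finset.mem_filter]
        refine ⟨Finset.mem_univ _, h.symm, ?_⟩
        rw [h]
        exact (hKzd i' (Finset.mem_coe.mp hi')).1
      have hss : ({i, i'} : Finset (Fin t)) ⊆ Finset.univ.filter (fun i0 => (S i0).2.2 = (S i).2.2
          ∧ kApproval (3 * q + 3) k (T i0 (Cand1.z (S i).2.2)) = 1) := by
        intro x hx
        rcases Finset.mem_insert.mp hx with rfl | hx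
        · exact m1
        · rw [Finset.mem_singleton] at hx; subst hx; exact m2
      have hcc := Finset.card_le_card hss
      rw [Finset.card_insert_of_notMem (by simpa using hne), Finset.card_singleton] at hcc
      omega
    have himgz : K.image (fun i => (S i).2.2) = Finset.univ := by
      apply Finset.eq_univ_of_card
      rw [Finset.card_image_of_injOn hinjz, hKq]; simp
    -- the d1-point votes are exactly K
    have hdK : ∀ i, kApproval (3 * q + 3) k (T i Cand1.d1) = 1 → i ∈ K := by
      intro i hdi
      have hDsub : K ⊆ Finset.univ.filter
          (fun i0 => kApproval (3 * q + 3) k (T i0 Cand1.d1) = 1) := by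
        intro i' hi'
        rw [Finset.mem_filter]
        exact ⟨Finset.mem_univ _, (hKzd i' hi').2⟩
      have hcard : (Finset.univ.filter
          (fun i0 => kApproval (3 * q + 3) k (T i0 Cand1.d1) = 1)).card ≤ q := by
        rw [← Stmt5Aux.sum_ite_card]
        refine le_trans (Finset.sum_le_sum fun i0 _ => ?_) hdsum
        have hle := Stmt5Aux.kApproval_le_one (3 * q + 3) k (T i0 Cand1.d1)
        split <;> omega
      have heq : K = Finset.univ.filter
          (fun i0 => kApproval (3 * q + 3) k (T i0 Cand1.d1) = 1) :=
        Finset.eq_of_subset_of_card_le hDsub (by omega)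
      rw [heq, Finset.mem_filter]
      exact ⟨Finset.mem_univ _, hdi⟩
    -- every vote where y loses its point is in K
    have hyK : ∀ i, kApproval (3 * q + 3) k (T i (Cand1.y (S i).2.1)) = 0 → i ∈ K := by
      intro i hyi
      by_contra hni
      have hx1 : kApproval (3 * q + 3) k (T i (Cand1.x (S i).1)) = 1 := by
        have hle := Stmt5Aux.kApproval_le_one (3 * q + 3) k (T i (Cand1.x (S i).1))
        have hne0 : ¬ kApproval (3 * q + 3) k (T i (Cand1.x (S i).1)) = 0 :=
          fun hh => hni ((hKmem i).mpr hh)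
        omega
      have hd0 : kApproval (3 * q + 3) k (T i Cand1.d1) = 0 := by
        have hle := Stmt5Aux.kApproval_le_one (3 * q + 3) k (T i Cand1.d1)
        have hne1 : ¬ kApproval (3 * q + 3) k (T i Cand1.d1) = 1 :=
          fun hh => hni (hdK i hh)
        omega
      have hz1 : kApproval (3 * q + 3) k (T i (Cand1.z (S i).2.2)) = 1 := by
        have h2 := hsum2 i
        have hle := Stmt5Aux.kApproval_le_one (3 * q + 3) k (T i (Cand1.z (S i).2.2))
        omega
      have hmem : (S i).2.2 ∈ K.image (fun i => (S i).2.2) := himgz ▸ Finset.mem_univ _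
      obtain ⟨i', hi', hii'⟩ := Finset.mem_image.mp hmem
      have hne : i' ≠ i := fun h => hni (h ▸ hi')
      have hj := hzle ((S i).2.2)
      have m1 : i ∈ Finset.univ.filter (fun i0 => (S i0).2.2 = (S i).2.2
          ∧ kApproval (3 * q + 3) k (T i0 (Cand1.z (S i).2.2)) = 1) := by
        rw [Finset.mem_filter]
        exact ⟨Finset.mem_univ _, rfl, hz1⟩
      have m2 : i' ∈ Finset.univ.filter (fun i0 => (S i0).2.2 = (S i).2.2
          ∧ kApproval (3 * q + 3) k (T i0 (Cand1.z (S i).2.2)) = 1) := by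
        rw [Finset.mem_filter]
        refine ⟨Finset.mem_univ _, hii', ?_⟩
        rw [← hii']
        exact (hKzd i' hi').1
      have hss : ({i', i} : Finset (Fin t)) ⊆ Finset.univ.filter (fun i0 => (S i0).2.2 = (S i).2.2
          ∧ kApproval (3 * q + 3) k (T i0 (Cand1.z (S i).2.2)) = 1) := by
        intro x hx
        rcases Finset.mem_insert.mp hx with rfl | hx
        · exact m2
        · rw [Finset.mem_singleton] at hx; subst hx; exact m1
      have hcc := Finset.card_le_card hss
      rw [Finset.card_insert_of_notMem (by simpa using hne), Finset.card_singleton] at hcc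
      omega
    -- coverage of Y within K
    have hycov : ∀ j : Fin q, ∃ i, i ∈ K ∧ (S i).2.1 = j := by
      intro j
      have hlt : (∑ i, kApproval (3 * q + 3) k (T i (Cand1.y j)))
          < ∑ i, kApproval (3 * q + 3) k (p' i (Cand1.y j)) := by
        have h1 := hsc' (Cand1.y j); have h2 := hY j; omega
      obtain ⟨i, _, hi⟩ := Finset.exists_lt_of_sum_lt hlt
      by_cases hcj : (S i).2.1 = j
      · refine ⟨i, ?_, hcj⟩
        apply hyK
        rw [hcj]
        have hle := Stmt5Aux.kApproval_le_one (3 * q + 3) k (p' i (Cand1.y j))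
        omega
      · exfalso
        have heq := hsame i (Cand1.y j)
          (fun h => by cases h)
          (fun h => hcj (by injection h with h'; exact h'.symm))
          (fun h => by cases h) (fun h => by cases h)
        omega
    have himgy : Finset.univ ⊆ K.image (fun i => (S i).2.1) := by
      intro j _
      obtain ⟨i, hi, hij⟩ := hycov j
      exact Finset.mem_image.mpr ⟨i, hi, hij⟩
    have hinjy : Set.InjOn (fun i => (S i).2.1) K := by
      apply Finset.injOn_of_card_image_eq
      have h1 := Finset.card_image_le (s := K) (f := fun i => (S i).2.1)
      have h2 : q ≤ (K.image fun i => (S i).2.1).card := by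
        have h := Finset.card_le_card himgy
        simpa using h
      omega
    refine ⟨K, hKq, fun i hi i' hi' hne => ⟨?_, ?_, ?_⟩⟩
    · exact fun h => hne (hinjx (Finset.mem_coe.mpr hi) (Finset.mem_coe.mpr hi') h)
    · exact fun h => hne (hinjy (Finset.mem_coe.mpr hi) (Finset.mem_coe.mpr hi') h)
    · exact fun h => hne (hinjz (Finset.mem_coe.mpr hi) (Finset.mem_coe.mpr hi') h)
  · -- matching → possible winner
    rintro ⟨K, hKcard, hKdisj⟩
    have hinjx : Set.InjOn (fun i => (S i).1) K := fun i hi i' hi' h => by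
      by_contra hne
      exact (hKdisj i (Finset.mem_coe.mp hi) i' (Finset.mem_coe.mp hi') hne).1 h
    have hinjy : Set.InjOn (fun i => (S i).2.1) K := fun i hi i' hi' h => by
      by_contra hne
      exact (hKdisj i (Finset.mem_coe.mp hi) i' (Finset.mem_coe.mp hi') hne).2.1 h
    have hinjz : Set.InjOn (fun i => (S i).2.2) K := fun i hi i' hi' h => by
      by_contra hne
      exact (hKdisj i (Finset.mem_coe.mp hi) i' (Finset.mem_coe.mp hi') hne).2.2 h
    have hcard1x : ∀ j : Fin q, (K.filter fun i => (S i).1 = j).card = 1 :=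
      fun j => Stmt5Aux.card_filter_eq_one K _ hinjx (by rw [hKcard]; simp) j
    have hcard1y : ∀ j : Fin q, (K.filter fun i => (S i).2.1 = j).card = 1 :=
      fun j => Stmt5Aux.card_filter_eq_one K _ hinjy (by rw [hKcard]; simp) j
    have hcard1z : ∀ j : Fin q, (K.filter fun i => (S i).2.2 = j).card = 1 :=
      fun j => Stmt5Aux.card_filter_eq_one K _ hinjz (by rw [hKcard]; simp) j
    set σ := Stmt5Aux.rot2 (3 * q + 3) k hkm with hσ
    set T : Fin t → (Cand1 q ≃ Fin (3 * q + 3)) :=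
      fun i => if i ∈ K then (p' i).trans σ else p' i with hTdef
    have hTK : ∀ i, i ∈ K → T i = (p' i).trans σ := fun i hi => by simp [hTdef, hi]
    have hTN : ∀ i, i ∉ K → T i = p' i := fun i hi => by simp [hTdef, hi]
    refine ⟨T, ?_, ?_⟩
    · intro i u v hu1 hu2 hv1 hv2 huv
      by_cases hi : i ∈ K
      · rw [hTK i hi]
        simp only [Equiv.trans_apply]
        have pu : (p' i u).val ≠ k :=
          fun h => hu1 ((p' i).injective (Fin.ext (h.trans (hz i).symm)))
        have pu' : (p' i u).val ≠ k + 1 :=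
          fun h => hu2 ((p' i).injective (Fin.ext (h.trans (hd i).symm)))
        have pv : (p' i v).val ≠ k :=
          fun h => hv1 ((p' i).injective (Fin.ext (h.trans (hz i).symm)))
        have pv' : (p' i v).val ≠ k + 1 :=
          fun h => hv2 ((p' i).injective (Fin.ext (h.trans (hd i).symm)))
        rw [Fin.lt_def] at huv ⊢
        rw [hσ, Stmt5Aux.rot2_val, Stmt5Aux.rot2_val]
        have := (p' i v).isLt
        split_ifs <;> omega
      · rw [hTN i hi]; exact huv
    · -- scores
      have hceqf : ∀ i, kApproval (3 * q + 3) k (T i Cand1.c) = kApproval (3 * q + 3) k (p' i Cand1.c) := by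
        intro i
        have hcv := hc2 i
        by_cases hi : i ∈ K
        · rw [hTK i hi]
          have hval : (((p' i).trans σ) Cand1.c).val = (p' i Cand1.c).val := by
            rw [Equiv.trans_apply, hσ, Stmt5Aux.rot2_val, if_neg (by omega), if_neg (by omega),
              if_neg (by omega)]
          rw [Stmt5Aux.kApproval_zero _ _ _ (by omega), Stmt5Aux.kApproval_zero _ _ _ (by omega)]
        · rw [hTN i hi]
      have hweqf : ∀ i, kApproval (3 * q + 3) k (T i Cand1.w) = kApproval (3 * q + 3) k (p' i Cand1.w) := by
        intro i
        have hcv := hc2 i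
        have hwv : k + 2 ≤ (p' i Cand1.w).val := by
          have := (hcw i); rw [Fin.lt_def] at this; omega
        by_cases hi : i ∈ K
        · rw [hTK i hi]
          have hval : (((p' i).trans σ) Cand1.w).val = (p' i Cand1.w).val := by
            rw [Equiv.trans_apply, hσ, Stmt5Aux.rot2_val, if_neg (by omega), if_neg (by omega),
              if_neg (by omega)]
          rw [Stmt5Aux.kApproval_zero _ _ _ (by omega), Stmt5Aux.kApproval_zero _ _ _ (by omega)]
        · rw [hTN i hi]
      -- x sums
      have hsumx : ∀ j : Fin q,
          (∑ i, kApproval (3 * q + 3) k (T i (Cand1.x j))) + 1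
            = ∑ i, kApproval (3 * q + 3) k (p' i (Cand1.x j)) := by
        intro j
        have hterm : ∀ i : Fin t, kApproval (3 * q + 3) k (T i (Cand1.x j))
            + (if i ∈ K ∧ (S i).1 = j then 1 else 0)
            = kApproval (3 * q + 3) k (p' i (Cand1.x j)) := by
          intro i
          by_cases hi : i ∈ K
          · by_cases hcj : (S i).1 = j
            · rw [if_pos ⟨hi, hcj⟩, hTK i hi]
              subst hcj
              have hval : (p' i (Cand1.x (S i).1)).val + 2 = k := hx i
              have hσv : (((p' i).trans σ) (Cand1.x (S i).1)).val = k := by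
                rw [Equiv.trans_apply, hσ, Stmt5Aux.rot2_val, if_pos (by omega)]
                omega
              rw [Stmt5Aux.kApproval_zero _ _ _ (by omega),
                Stmt5Aux.kApproval_pos _ _ _ (by omega)]
            · rw [if_neg (by tauto), hTK i hi, add_zero]
              have h4 := hnot4 i (Cand1.x j)
                (fun h => hcj (by injection h with h'; exact h'.symm))
                (fun h => by cases h) (fun h => by cases h)
                (fun h => by cases h)
              rcases h4 with h | h
              · have hσv : (((p' i).trans σ) (Cand1.x j)).val = (p' i (Cand1.x j)).val + 2 := by
                  rw [Equiv.trans_apply, hσ, Stmt5Aux.rot2_val, if_pos (by omega)]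
                rw [Stmt5Aux.kApproval_pos _ _ _ (by omega),
                  Stmt5Aux.kApproval_pos _ _ _ (by omega)]
              · have hσv : (((p' i).trans σ) (Cand1.x j)).val = (p' i (Cand1.x j)).val := by
                  rw [Equiv.trans_apply, hσ, Stmt5Aux.rot2_val, if_neg (by omega),
                    if_neg (by omega), if_neg (by omega)]
                rw [Stmt5Aux.kApproval_zero _ _ _ (by omega),
                  Stmt5Aux.kApproval_zero _ _ _ (by omega)]
          · rw [if_neg (by tauto), hTN i hi, add_zero]
        have hsum := Finset.sum_congr rfl (fun i (_ : i ∈ Finset.univ) => hterm i)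
        rw [Finset.sum_add_distrib, Stmt5Aux.sum_ite_card] at hsum
        have hfilter : (Finset.univ.filter fun i => i ∈ K ∧ (S i).1 = j)
            = K.filter (fun i => (S i).1 = j) := by
          ext i; simp [Finset.mem_filter]
        rw [hfilter, hcard1x j] at hsum
        exact hsum
      -- y sums
      have hsumy : ∀ j : Fin q,
          (∑ i, kApproval (3 * q + 3) k (T i (Cand1.y j))) + 1
            = ∑ i, kApproval (3 * q + 3) k (p' i (Cand1.y j)) := by
        intro j
        have hterm : ∀ i : Fin t, kApproval (3 * q + 3) k (T i (Cand1.y j))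
            + (if i ∈ K ∧ (S i).2.1 = j then 1 else 0)
            = kApproval (3 * q + 3) k (p' i (Cand1.y j)) := by
          intro i
          by_cases hi : i ∈ K
          · by_cases hcj : (S i).2.1 = j
            · rw [if_pos ⟨hi, hcj⟩, hTK i hi]
              subst hcj
              have hval : (p' i (Cand1.y (S i).2.1)).val + 1 = k := hy i
              have hσv : (((p' i).trans σ) (Cand1.y (S i).2.1)).val = k + 1 := by
                rw [Equiv.trans_apply, hσ, Stmt5Aux.rot2_val, if_pos (by omega)]
                omega
              rw [Stmt5Aux.kApproval_zero _ _ _ (by omega),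
                Stmt5Aux.kApproval_pos _ _ _ (by omega)]
            · rw [if_neg (by tauto), hTK i hi, add_zero]
              have h4 := hnot4 i (Cand1.y j)
                (fun h => by cases h)
                (fun h => hcj (by injection h with h'; exact h'.symm))
                (fun h => by cases h) (fun h => by cases h)
              rcases h4 with h | h
              · have hσv : (((p' i).trans σ) (Cand1.y j)).val = (p' i (Cand1.y j)).val + 2 := by
                  rw [Equiv.trans_apply, hσ, Stmt5Aux.rot2_val, if_pos (by omega)]
                rw [Stmt5Aux.kApproval_pos _ _ _ (by omega),
                  Stmt5Aux.kApproval_pos _ _ _ (by omega)]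
              · have hσv : (((p' i).trans σ) (Cand1.y j)).val = (p' i (Cand1.y j)).val := by
                  rw [Equiv.trans_apply, hσ, Stmt5Aux.rot2_val, if_neg (by omega),
                    if_neg (by omega), if_neg (by omega)]
                rw [Stmt5Aux.kApproval_zero _ _ _ (by omega),
                  Stmt5Aux.kApproval_zero _ _ _ (by omega)]
          · rw [if_neg (by tauto), hTN i hi, add_zero]
        have hsum := Finset.sum_congr rfl (fun i (_ : i ∈ Finset.univ) => hterm i)
        rw [Finset.sum_add_distrib, Stmt5Aux.sum_ite_card] at hsum
        have hfilter : (Finset.univ.filter fun i => i ∈ K ∧ (S i).2.1 = j)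
            = K.filter (fun i => (S i).2.1 = j) := by
          ext i; simp [Finset.mem_filter]
        rw [hfilter, hcard1y j] at hsum
        exact hsum
      -- z sums
      have hsumz : ∀ j : Fin q,
          (∑ i, kApproval (3 * q + 3) k (p' i (Cand1.z j))) + 1
            = ∑ i, kApproval (3 * q + 3) k (T i (Cand1.z j)) := by
        intro j
        have hterm : ∀ i : Fin t, kApproval (3 * q + 3) k (p' i (Cand1.z j))
            + (if i ∈ K ∧ (S i).2.2 = j then 1 else 0)
            = kApproval (3 * q + 3) k (T i (Cand1.z j)) := by
          intro i
          by_cases hi : i ∈ K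
          · by_cases hcj : (S i).2.2 = j
            · rw [if_pos ⟨hi, hcj⟩, hTK i hi]
              subst hcj
              have hval : (p' i (Cand1.z (S i).2.2)).val = k := hz i
              have hσv : (((p' i).trans σ) (Cand1.z (S i).2.2)).val = 0 := by
                rw [Equiv.trans_apply, hσ, Stmt5Aux.rot2_val, if_neg (by omega), if_pos hval]
              rw [Stmt5Aux.kApproval_zero _ _ _ (by omega),
                Stmt5Aux.kApproval_pos _ _ _ (by omega)]
            · rw [if_neg (by tauto), hTK i hi, add_zero]
              have h4 := hnot4 i (Cand1.z j)
                (fun h => by cases h) (fun h => by cases h)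
                (fun h => hcj (by injection h with h'; exact h'.symm))
                (fun h => by cases h)
              rcases h4 with h | h
              · have hσv : (((p' i).trans σ) (Cand1.z j)).val = (p' i (Cand1.z j)).val + 2 := by
                  rw [Equiv.trans_apply, hσ, Stmt5Aux.rot2_val, if_pos (by omega)]
                rw [Stmt5Aux.kApproval_pos _ _ _ (by omega),
                  Stmt5Aux.kApproval_pos _ _ _ (by omega)]
              · have hσv : (((p' i).trans σ) (Cand1.z j)).val = (p' i (Cand1.z j)).val := by
                  rw [Equiv.trans_apply, hσ, Stmt5Aux.rot2_val, if_neg (by omega),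
                    if_neg (by omega), if_neg (by omega)]
                rw [Stmt5Aux.kApproval_zero _ _ _ (by omega),
                  Stmt5Aux.kApproval_zero _ _ _ (by omega)]
          · rw [if_neg (by tauto), hTN i hi, add_zero]
        have hsum := Finset.sum_congr rfl (fun i (_ : i ∈ Finset.univ) => hterm i)
        rw [Finset.sum_add_distrib, Stmt5Aux.sum_ite_card] at hsum
        have hfilter : (Finset.univ.filter fun i => i ∈ K ∧ (S i).2.2 = j)
            = K.filter (fun i => (S i).2.2 = j) := by
          ext i; simp [Finset.mem_filter]
        rw [hfilter, hcard1z j] at hsum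
        exact hsum
      -- d1 sums
      have hsumdT : (∑ i, kApproval (3 * q + 3) k (T i Cand1.d1)) = q := by
        have hterm : ∀ i : Fin t, kApproval (3 * q + 3) k (T i Cand1.d1)
            = if i ∈ K then 1 else 0 := by
          intro i
          by_cases hi : i ∈ K
          · rw [if_pos hi, hTK i hi]
            have hdv := hd i
            have hσv : (((p' i).trans σ) Cand1.d1).val = 1 := by
              rw [Equiv.trans_apply, hσ, Stmt5Aux.rot2_val, if_neg (by omega),
                if_neg (by omega), if_pos (hd i)]
            exact Stmt5Aux.kApproval_pos _ _ _ (by omega)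
          · rw [if_neg hi, hTN i hi]
            exact Stmt5Aux.kApproval_zero _ _ _ (by rw [hd i]; omega)
        rw [Finset.sum_congr rfl (fun i (_ : i ∈ Finset.univ) => hterm i), Stmt5Aux.sum_ite_card]
        rw [Finset.filter_univ_mem, hKcard]
      have hsumdP : (∑ i, kApproval (3 * q + 3) k (p' i Cand1.d1)) = 0 := by
        rw [Finset.sum_congr rfl (fun i (_ : i ∈ Finset.univ) =>
          Stmt5Aux.kApproval_zero _ _ _ (by rw [hd i]; omega)), Finset.sum_const_zero]
      -- main score inequality
      intro c'
      simp only [Stmt5Aux.score_append, Stmt5Aux.score_ofFn]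
      have hc0 : (∑ i, kApproval (3 * q + 3) k (T i Cand1.c))
          + score (kApproval (3 * q + 3) k) Q Cand1.c = lam := by
        rw [Finset.sum_congr rfl (fun i (_ : i ∈ Finset.univ) => hceqf i)]
        exact hlam
      rw [hc0]
      cases c' with
      | x j => have h1 := hsumx j; have h2 := hX j; omega
      | y j => have h1 := hsumy j; have h2 := hY j; omega
      | z j => have h1 := hsumz j; have h2 := hZ j; omega
      | c => omega
      | d1 => have h1 := hsumdT; have h2 := hsumdP; omega
      | w =>
        have h1 : (∑ i, kApproval (3 * q + 3) k (T i Cand1.w))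
            = ∑ i, kApproval (3 * q + 3) k (p' i Cand1.w) :=
          Finset.sum_congr rfl (fun i _ => hweqf i)
        omega
end

section
/- Let r be a pure positional scoring rule that is p-valued with threshold n_0 (so for every m ≥ n_0 the scoring vector s^m of r has exactly p distinct values, where p ≥ 2). Then for every integer γ ≥ n_0 there exists a length m with n_0 ≤ m ≤ n_0 + γ·p such that some score value occurs exactly γ times in s^m. -/
/-- let `sv` be a pure positional scoring rule (each `sv m` is nonincreasing, and
`sv (m+1)` is obtained from `sv m` by inserting one score value) that is `p`-valued with
threshold `n₀` (`p ≥ 2`): for every `m ≥ n₀` the vector `sv m` has exactly `p` distinct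
values.  Then for every integer `γ ≥ n₀` there exists a length `m` with
`n₀ ≤ m ≤ n₀ + γ·p` such that some score value occurs exactly `γ` times in `sv m`. -/
theorem stmt6 (p n0 : ℕ) (hp : 2 ≤ p) (hn0 : 1 ≤ n0)
    (sv : (m : ℕ) → Fin m → ℕ)
    (hanti : ∀ m, Antitone (sv m))
    (hpure : ∀ m, ∃ jins : Fin (m + 1),
      (∀ k : Fin m, (k : ℕ) < (jins : ℕ) → sv (m + 1) k.castSucc = sv m k) ∧
      (∀ k : Fin m, (jins : ℕ) ≤ (k : ℕ) → sv (m + 1) k.succ = sv m k))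
    (hval : ∀ m, n0 ≤ m → (Finset.univ.image (sv m)).card = p)
    (γ : ℕ) (hγ : n0 ≤ γ) :
    ∃ m, n0 ≤ m ∧ m ≤ n0 + γ * p ∧
      ∃ v : ℕ, (Finset.univ.filter fun k : Fin m => sv m k = v).card = γ := by
  classical
  set C : (m : ℕ) → ℕ → ℕ :=
    fun m v => (Finset.univ.filter fun k : Fin m => sv m k = v).card with hC
  -- step lemma: one count increases by one, the rest stay
  have hstep : ∀ m, ∃ x, ∀ v, C (m + 1) v = C m v + if x = v then 1 else 0 := by
    intro m
    obtain ⟨j, h1, h2⟩ := hpure m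
    have hsa : ∀ k : Fin m, sv (m + 1) (j.succAbove k) = sv m k := by
      intro k
      rcases lt_or_ge (k : ℕ) (j : ℕ) with h | h
      · rw [Fin.succAbove_of_castSucc_lt _ _ (by simpa [Fin.lt_def] using h)]
        exact h1 k h
      · rw [Fin.succAbove_of_le_castSucc _ _ (by simpa [Fin.le_def] using h)]
        exact h2 k h
    refine ⟨sv (m + 1) j, fun v => ?_⟩
    simp only [hC, Finset.card_filter]
    rw [Fin.sum_univ_succAbove (fun i => if sv (m + 1) i = v then 1 else 0) j]
    simp only [hsa]
    omega
  -- total count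
  have hsum : ∀ m : ℕ, ∑ v ∈ Finset.univ.image (sv m), C m v = m := by
    intro m
    have := Finset.card_eq_sum_card_fiberwise
      (f := sv m) (s := Finset.univ) (t := Finset.univ.image (sv m))
      (fun x _ => Finset.mem_image_of_mem _ (Finset.mem_univ x))
    simpa [hC] using this.symm
  -- base bound
  have hbase : ∀ v, C n0 v < γ := by
    intro v
    by_cases hv : v ∈ Finset.univ.image (sv n0)
    · have hone : ∀ w ∈ Finset.univ.image (sv n0), 1 ≤ C n0 w := by
        intro w hw
        obtain ⟨k, _, hk⟩ := Finset.mem_image.mp hw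
        have : k ∈ Finset.univ.filter fun k : Fin n0 => sv n0 k = w :=
          Finset.mem_filter.mpr ⟨Finset.mem_univ _, hk⟩
        exact Finset.card_pos.mpr ⟨k, this⟩
      have hsplit : C n0 v + ∑ w ∈ (Finset.univ.image (sv n0)).erase v, C n0 w = n0 := by
        rw [Finset.add_sum_erase _ _ hv]; exact hsum n0
      have hcardE : ((Finset.univ.image (sv n0)).erase v).card = p - 1 := by
        rw [Finset.card_erase_of_mem hv, hval n0 le_rfl]
      have hle : ((Finset.univ.image (sv n0)).erase v).card ≤
          ∑ w ∈ (Finset.univ.image (sv n0)).erase v, C n0 w := by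
        rw [Finset.card_eq_sum_ones]
        exact Finset.sum_le_sum fun w hw => hone w (Finset.mem_of_mem_erase hw)
      omega
    · have : C n0 v = 0 := by
        rw [hC, Finset.card_eq_zero]
        refine Finset.filter_eq_empty_iff.mpr fun k _ hk => hv ?_
        exact Finset.mem_image.mpr ⟨k, Finset.mem_univ _, hk⟩
      omega
  by_contra hcon
  push_neg at hcon
  have hne : ∀ m, n0 ≤ m → m ≤ n0 + γ * p → ∀ v, C m v ≠ γ := by
    intro m h1 h2 v
    exact hcon m h1 h2 v
  -- induction: all counts stay below γ
  have hind : ∀ i, i ≤ γ * p → ∀ v, C (n0 + i) v < γ := by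
    intro i
    induction i with
    | zero => intro _ v; exact hbase v
    | succ i ih =>
      intro hi v
      obtain ⟨x, hx⟩ := hstep (n0 + i)
      have h1 : C (n0 + i) v < γ := ih (by omega) v
      have h2 : C (n0 + i + 1) v ≠ γ := hne (n0 + i + 1) (by omega) (by omega) v
      have heq : C (n0 + (i + 1)) v = C (n0 + i + 1) v := rfl
      have := hx v
      rw [heq]
      split at this <;> omega
  -- final contradiction at m = n0 + γ * p
  have hfin : ∀ v ∈ Finset.univ.image (sv (n0 + γ * p)), C (n0 + γ * p) v + 1 ≤ γ := by
    intro v _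
    have := hind (γ * p) le_rfl v
    omega
  have hcard := hval (n0 + γ * p) (by omega)
  have hsumle : ∑ v ∈ Finset.univ.image (sv (n0 + γ * p)), (C (n0 + γ * p) v + 1) ≤
      ∑ _v ∈ Finset.univ.image (sv (n0 + γ * p)), γ :=
    Finset.sum_le_sum hfin
  rw [Finset.sum_add_distrib, hsum, Finset.sum_const, Finset.sum_const, hcard,
    smul_eq_mul, smul_eq_mul, mul_one, mul_comm p γ] at hsumle
  -- hsumle : n0 + γ * p + p ≤ γ * p
  generalize γ * p = x at hsumle
  omega
end

section
/- Let T be a total order on a finite set C, let g ∈ C, and let p be the partial chain on C whose linear order is the restriction of T to C ∖ {g}. Then: (i) the completions of p are exactly the total orders obtained from the restriction of T to C ∖ {g} by inserting g at some position; and (ii) for every scoring vector s of length |C| and every completion T* of p, every candidate e ranked above g in T satisfies s-score of e in T* ≤ s-score of e in T, and every candidate e ranked below g in T satisfies s-score of e in T* ≥ s-score of e in T. -/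
lemma filter_lt_card {C : Type*} [Fintype C] [DecidableEq C]
    (T : C ≃ Fin (Fintype.card C)) (e : C) :
    (Finset.univ.filter (fun b => T b < T e)).card = (T e).val := by
  have h : (Finset.univ.filter (fun b => T b < T e)).card
      = (Finset.univ.filter (fun i : Fin (Fintype.card C) => i < T e)).card := by
    apply Finset.card_nbij (fun b => T b)
    · intro b hb; simpa using (Finset.mem_filter.mp hb).2
    · intro a _ b _ h; exact T.injective h
    · intro i hi
      refine ⟨T.symm i, ?_, by simp⟩
      simp only [Finset.mem_coe, Finset.mem_filter, Finset.mem_univ, true_and,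
        Equiv.apply_symm_apply]
      simpa using (Finset.mem_filter.mp hi).2
  rw [h]
  have : Finset.univ.filter (fun i : Fin (Fintype.card C) => i < T e) = Finset.Iio (T e) := by
    ext i; simp
  rw [this, Fin.card_Iio]

lemma filter_gt_card {C : Type*} [Fintype C] [DecidableEq C]
    (T : C ≃ Fin (Fintype.card C)) (e : C) :
    (Finset.univ.filter (fun b => T e < T b)).card = Fintype.card C - 1 - (T e).val := by
  have h : (Finset.univ.filter (fun b => T e < T b)).card
      = (Finset.univ.filter (fun i : Fin (Fintype.card C) => T e < i)).card := by
    apply Finset.card_nbij (fun b => T b)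
    · intro b hb; simpa using (Finset.mem_filter.mp hb).2
    · intro a _ b _ h; exact T.injective h
    · intro i hi
      refine ⟨T.symm i, ?_, by simp⟩
      simp only [Finset.mem_coe, Finset.mem_filter, Finset.mem_univ, true_and,
        Equiv.apply_symm_apply]
      simpa using (Finset.mem_filter.mp hi).2
  rw [h]
  have : Finset.univ.filter (fun i : Fin (Fintype.card C) => T e < i) = Finset.Ioi (T e) := by
    ext i; simp
  rw [this, Fin.card_Ioi]

/-- let `T` be a total order on a finite set `C` (modelled as an equivalence
with `Fin |C|`, sending a candidate to its `0`-indexed position), let `g ∈ C`, and let `p`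
be the partial chain on `C` whose linear order is the restriction of `T` to `C ∖ {g}`
(so a completion of `p` is a total order `T*` preserving the relative order of all pairs
of candidates different from `g`).  Then:
(i) the completions of `p` are exactly the total orders obtained from the restriction of
`T` to `C ∖ {g}` by inserting `g` at some position, i.e. `T*` extends `p` iff the relative
order of every pair of candidates different from `g` is the same in `T*` as in `T`; and
(ii) for every scoring vector `s` of length `|C|` and every completion `T*` of `p`, every
candidate ranked above `g` in `T` has `s`-score in `T*` at most its `s`-score in `T`, and
every candidate ranked below `g` in `T` has `s`-score in `T*` at least its `s`-score in
`T`. -/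
theorem stmt8 {C : Type*} [Fintype C] [DecidableEq C]
    (T : C ≃ Fin (Fintype.card C)) (g : C)
    (s : Fin (Fintype.card C) → ℕ) (hanti : Antitone s)
    (h0 : 0 < Fintype.card C)
    (hnt : s ⟨Fintype.card C - 1, by omega⟩ < s ⟨0, h0⟩) :
    (∀ Tstar : C ≃ Fin (Fintype.card C),
      (∀ a b, a ≠ g → b ≠ g → T a < T b → Tstar a < Tstar b) ↔
      (∀ a b, a ≠ g → b ≠ g → (T a < T b ↔ Tstar a < Tstar b))) ∧
    (∀ Tstar : C ≃ Fin (Fintype.card C),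
      (∀ a b, a ≠ g → b ≠ g → T a < T b → Tstar a < Tstar b) →
      (∀ e, T e < T g → s (Tstar e) ≤ s (T e)) ∧
      (∀ e, T g < T e → s (T e) ≤ s (Tstar e))) := by
  constructor
  · intro Tstar
    constructor
    · intro h a b ha hb
      refine ⟨h a b ha hb, fun hlt => ?_⟩
      rcases lt_trichotomy (T a) (T b) with h1 | h1 | h1
      · exact h1
      · exact absurd (T.injective (Fin.ext (by exact_mod_cast congrArg Fin.val h1))) (by
          intro hab; subst hab; exact lt_irrefl _ hlt)
      · exact absurd hlt (not_lt.mpr (le_of_lt (h b a hb ha h1)))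
    · intro h a b ha hb hlt
      exact (h a b ha hb).mp hlt
  · intro Tstar h
    constructor
    · intro e he
      apply hanti
      have hne : e ≠ g := fun hc => by subst hc; exact lt_irrefl _ he
      have hsub : Finset.univ.filter (fun b => T b < T e)
          ⊆ Finset.univ.filter (fun b => Tstar b < Tstar e) := by
        intro b hb
        have hb' : T b < T e := by simpa using (Finset.mem_filter.mp hb).2
        have hbne : b ≠ g := fun hc => by
          subst hc; exact absurd (hb'.trans he) (lt_irrefl _)
        simp only [Finset.mem_filter, Finset.mem_univ, true_and]
        exact h b e hbne hne hb'
      have := Finset.card_le_card hsub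
      rw [filter_lt_card T e, filter_lt_card Tstar e] at this
      exact this
    · intro e he
      apply hanti
      have hne : e ≠ g := fun hc => by subst hc; exact lt_irrefl _ he
      have hsub : Finset.univ.filter (fun b => T e < T b)
          ⊆ Finset.univ.filter (fun b => Tstar e < Tstar b) := by
        intro b hb
        have hb' : T e < T b := by simpa using (Finset.mem_filter.mp hb).2
        have hbne : b ≠ g := fun hc => by
          subst hc; exact absurd (he.trans hb') (lt_irrefl _)
        simp only [Finset.mem_filter, Finset.mem_univ, true_and]
        exact h e b hne hbne hb'
      have hc := Finset.card_le_card hsub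
      rw [filter_gt_card T e, filter_gt_card Tstar e] at hc
      have h1 : (T e).val < Fintype.card C := (T e).isLt
      have h2 : (Tstar e).val < Fintype.card C := (Tstar e).isLt
      show (Tstar e : ℕ) ≤ (T e : ℕ)
      omega
end

section
/- With P, P', Q and the scoring vector s as in Reduction 3 from the 3DM instance (described in the context, with λ := s(P' ∪ Q, c)): (i) for every completion P̄ of P, s(P̄ ∪ Q, c) ≤ λ; and (ii) for every completion P̄ of P, if c is a winner of P̄ ∪ Q (i.e., s(P̄ ∪ Q, c) ≥ s(P̄ ∪ Q, c') for all candidates c'), then s(P̄ ∪ Q, c) = λ. -/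
/-- `prefL n ℓ k` is the sum of the block lengths `ℓ j` over `j < k`:
the (0-indexed) first position of the `k`-th block of the scoring vector. -/
def prefL (n : ℕ) (ℓ : Fin n → ℕ) (k : ℕ) : ℕ :=
  ∑ j : Fin n, if (j : ℕ) < k then ℓ j else 0


lemma prefL_zero (n : ℕ) (ℓ : Fin n → ℕ) : prefL n ℓ 0 = 0 := by
  simp [prefL]

lemma prefL_succ (n : ℕ) (ℓ : Fin n → ℕ) (k : ℕ) (hk : k < n) :
    prefL n ℓ (k + 1) = prefL n ℓ k + ℓ ⟨k, hk⟩ := by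
  unfold prefL
  have : ∀ j : Fin n, (if (j : ℕ) < k + 1 then ℓ j else 0)
      = (if (j : ℕ) < k then ℓ j else 0) + (if j = ⟨k, hk⟩ then ℓ j else 0) := by
    intro j
    rcases eq_or_ne j ⟨k, hk⟩ with rfl | h2
    · simp
    · have h3 : (j : ℕ) ≠ k := fun h => h2 (Fin.ext h)
      rw [if_neg h2]
      by_cases h1 : (j : ℕ) < k
      · rw [if_pos h1, if_pos (by omega)]; simp
      · rw [if_neg h1, if_neg (by omega)]
  rw [Finset.sum_congr rfl (fun j _ => this j), Finset.sum_add_distrib]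
  simp

lemma prefL_mono (n : ℕ) (ℓ : Fin n → ℕ) : Monotone (prefL n ℓ) := by
  intro k k' h
  refine Finset.sum_le_sum fun j _ => ?_
  split_ifs with h1 h2 <;> omega

lemma exists_block (n : ℕ) (ℓ : Fin n → ℕ) (v : ℕ) (hv : v < prefL n ℓ n) :
    ∃ j : Fin n, prefL n ℓ (j : ℕ) ≤ v ∧ v < prefL n ℓ ((j : ℕ) + 1) := by
  classical
  have hP0 : prefL n ℓ 0 ≤ v := by simp [prefL_zero]
  have hPn : ¬ prefL n ℓ n ≤ v := by omega
  have hJle : Nat.findGreatest (fun k => prefL n ℓ k ≤ v) n ≤ n := Nat.findGreatest_le n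
  have hJspec : prefL n ℓ (Nat.findGreatest (fun k => prefL n ℓ k ≤ v) n) ≤ v :=
    Nat.findGreatest_spec (P := fun k => prefL n ℓ k ≤ v) (Nat.zero_le n) hP0
  have hJlt : Nat.findGreatest (fun k => prefL n ℓ k ≤ v) n < n :=
    lt_of_le_of_ne hJle (by intro h; rw [h] at hJspec; exact hPn hJspec)
  have hnext : ¬ prefL n ℓ (Nat.findGreatest (fun k => prefL n ℓ k ≤ v) n + 1) ≤ v :=
    Nat.findGreatest_is_greatest (P := fun k => prefL n ℓ k ≤ v) (Nat.lt_succ_self _) hJlt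
  exact ⟨⟨_, hJlt⟩, hJspec, not_le.mp hnext⟩

lemma rank_lemma {C : Type*} {m : ℕ} (p T : C ≃ Fin m) (g : C)
    (hT : ∀ u v, u ≠ g → v ≠ g → p u < p v → T u < T v)
    (u : C) (hu : u ≠ g) (r : ℕ) (hr1 : r ≤ (p u).val)
    (hr2 : (p g).val < (p u).val → r < (p u).val) :
    r ≤ (T u).val := by
  classical
  have hne : (p g).val ≠ (p u).val := by
    intro h
    exact hu (p.injective (Fin.ext h)).symm
  have hvum : (p u).val < m := (p u).isLt
  set E : ℕ → ℕ := fun k => if k < (p g).val then k else k + 1 with hE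
  have hElt : ∀ k : Fin r, E (k : ℕ) < (p u).val := by
    intro k
    have hk := k.isLt
    rcases Nat.lt_or_ge (p g).val (p u).val with hgu | hgu
    · have := hr2 hgu
      by_cases h : (k : ℕ) < (p g).val <;> simp [hE, h] <;> omega
    · have hgu' : (p u).val < (p g).val := by omega
      have h : (k : ℕ) < (p g).val := by omega
      simp [hE, h]; omega
  have hEne : ∀ k : Fin r, E (k : ℕ) ≠ (p g).val := by
    intro k
    by_cases h : (k : ℕ) < (p g).val <;> simp [hE, h] <;> omega
  have hEinj : ∀ k k' : Fin r, k ≠ k' → E (k : ℕ) ≠ E (k' : ℕ) := by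
    intro k k' hkk
    have : (k : ℕ) ≠ (k' : ℕ) := fun h => hkk (Fin.ext h)
    by_cases h : (k : ℕ) < (p g).val <;> by_cases h' : (k' : ℕ) < (p g).val <;>
      simp [hE, h, h'] <;> omega
  have hcand : ∀ k : Fin r, T (p.symm ⟨E (k : ℕ), lt_trans (hElt k) hvum⟩) < T u := by
    intro k
    refine hT _ _ ?_ hu ?_
    · intro h
      apply hEne k
      have := congrArg p h
      rw [Equiv.apply_symm_apply] at this
      exact congrArg Fin.val this
    · rw [Fin.lt_def, Equiv.apply_symm_apply]
      exact hElt k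
  let f : Fin r → Fin ((T u).val) := fun k =>
    ⟨(T (p.symm ⟨E (k : ℕ), lt_trans (hElt k) hvum⟩)).val, hcand k⟩
  have hfinj : Function.Injective f := by
    intro k k' hkk
    by_contra hne2
    apply hEinj k k' hne2
    have h1 := congrArg Fin.val hkk
    simp only [f] at h1
    have h2 := T.injective (Fin.ext h1)
    have h3 := p.symm.injective h2
    exact congrArg Fin.val h3
  simpa using Fintype.card_le_of_injective f hfinj

/-- Candidates of Reduction 3: the element candidates of `X`, `Y`, `Z` (each of size `q`),
the distinguished candidate `c`, the fresh candidates `g`, `d`, `w`, and for each value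
block `j` of the scoring vector (with multiplicity `ℓ j`) a set `H_j` of `ℓ j − 1` dummy
candidates. -/
inductive CandU (q : ℕ) (ℓ : Fin (3 * q + 4) → ℕ) where
  | x (i : Fin q)
  | y (i : Fin q)
  | z (i : Fin q)
  | c
  | g
  | d
  | w
  | h (j : Fin (3 * q + 4)) (k : Fin (ℓ j - 1))


def candEquiv (q : ℕ) (ℓ : Fin (3 * q + 4) → ℕ) :
    CandU q ℓ ≃ ((Unit ⊕ Unit ⊕ Unit ⊕ Unit) ⊕ (Fin q ⊕ Fin q ⊕ Fin q) ⊕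
      (Σ j : Fin (3 * q + 4), Fin (ℓ j - 1))) where
  toFun u := match u with
    | .c => Sum.inl (Sum.inl ())
    | .g => Sum.inl (Sum.inr (Sum.inl ()))
    | .d => Sum.inl (Sum.inr (Sum.inr (Sum.inl ())))
    | .w => Sum.inl (Sum.inr (Sum.inr (Sum.inr ())))
    | .x i => Sum.inr (Sum.inl (Sum.inl i))
    | .y i => Sum.inr (Sum.inl (Sum.inr (Sum.inl i)))
    | .z i => Sum.inr (Sum.inl (Sum.inr (Sum.inr i)))
    | .h j k => Sum.inr (Sum.inr ⟨j, k⟩)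
  invFun u := match u with
    | Sum.inl (Sum.inl ()) => .c
    | Sum.inl (Sum.inr (Sum.inl ())) => .g
    | Sum.inl (Sum.inr (Sum.inr (Sum.inl ()))) => .d
    | Sum.inl (Sum.inr (Sum.inr (Sum.inr ()))) => .w
    | Sum.inr (Sum.inl (Sum.inl i)) => .x i
    | Sum.inr (Sum.inl (Sum.inr (Sum.inl i))) => .y i
    | Sum.inr (Sum.inl (Sum.inr (Sum.inr i))) => .z i
    | Sum.inr (Sum.inr ⟨j, k⟩) => .h j k
  left_inv u := by cases u <;> rfl
  right_inv u := by
    rcases u with ((⟨⟩|⟨⟩|⟨⟩|⟨⟩)|(i|i|i)|⟨j,k⟩) <;> rfl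

noncomputable instance candFintype (q : ℕ) (ℓ : Fin (3 * q + 4) → ℕ) :
    Fintype (CandU q ℓ) := Fintype.ofEquiv _ (candEquiv q ℓ).symm

lemma sum_candU (q : ℕ) (ℓ : Fin (3 * q + 4) → ℕ) (f : CandU q ℓ → ℕ) :
    ∑ u : CandU q ℓ, f u = f .c + f .g + f .d + f .w + (∑ i : Fin q, f (.x i)) +
      (∑ i : Fin q, f (.y i)) + (∑ i : Fin q, f (.z i)) +
      ∑ j : Fin (3 * q + 4), ∑ k : Fin (ℓ j - 1), f (.h j k) := by
  rw [← Equiv.sum_comp (candEquiv q ℓ).symm f]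
  simp only [Fintype.sum_sum_type, candEquiv, Equiv.coe_fn_symm_mk]
  rw [← Finset.univ_sigma_univ]
  rw [← Finset.sum_sigma' Finset.univ (fun _ => Finset.univ) (fun j k => f (.h j k))]
  simp
  ring


lemma sum_shift (q : ℕ) (v : Fin q → ℕ) (b c d : ℕ) (hv : ∀ ix, v ix + b = c + d) :
    (∑ ix : Fin q, v ix) + q * b = q * c + q * d := by
  have h1 : ∑ ix : Fin q, (v ix + b) = ∑ _ix : Fin q, (c + d) :=
    Finset.sum_congr rfl fun ix _ => hv ix
  rw [Finset.sum_add_distrib] at h1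
  simp only [Finset.sum_const, Finset.card_univ, Fintype.card_fin, smul_eq_mul] at h1
  rw [Nat.mul_add] at h1
  exact h1

/-- in Reduction 3 (unbounded case: `m' = 3q+4` distinct values
`a 0 > a 1 > … > a (3q+3)` with multiplicities `ℓ`, `pᵢ` obtained from `p'ᵢ` by deleting
`g`, and `Q` satisfying the stated score conditions with `λ = s(P'∪Q, c)`):
(i) for every completion `P̄` of `P`, `s(P̄∪Q, c) ≤ λ`; and
(ii) for every completion `P̄` of `P`, if `c` is a winner of `P̄∪Q` then `s(P̄∪Q, c) = λ`. -/
theorem stmt9 (q t m : ℕ) (hq : 1 ≤ q)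
    (a : Fin (3 * q + 4) → ℕ) (haAnti : StrictAnti a)
    (ℓ : Fin (3 * q + 4) → ℕ) (hℓ : ∀ j, 1 ≤ ℓ j)
    (hm : m = prefL (3 * q + 4) ℓ (3 * q + 4))
    (s : Fin m → ℕ)
    (hs : ∀ (pos : Fin m) (j : Fin (3 * q + 4)),
      prefL (3 * q + 4) ℓ (j : ℕ) ≤ (pos : ℕ) →
      (pos : ℕ) < prefL (3 * q + 4) ℓ ((j : ℕ) + 1) → s pos = a j)
    (S : Fin t → Fin q × Fin q × Fin q)
    (p' : Fin t → (CandU q ℓ ≃ Fin m))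
    (hgpos : ∀ i, (p' i CandU.g).val = prefL (3 * q + 4) ℓ (3 * q - 1))
    (hdpos : ∀ i, (p' i CandU.d).val = prefL (3 * q + 4) ℓ (3 * q))
    (hxpos : ∀ i, (p' i (CandU.x (S i).1)).val = prefL (3 * q + 4) ℓ (3 * q + 1))
    (hypos : ∀ i, (p' i (CandU.y (S i).2.1)).val = prefL (3 * q + 4) ℓ (3 * q + 2))
    (hzpos : ∀ i, (p' i (CandU.z (S i).2.2)).val = prefL (3 * q + 4) ℓ (3 * q + 3))
    (hhpos : ∀ (i : Fin t) (j : Fin (3 * q + 4)) (k : Fin (ℓ j - 1)),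
      prefL (3 * q + 4) ℓ (j : ℕ) ≤ (p' i (CandU.h j k)).val ∧
      (p' i (CandU.h j k)).val < prefL (3 * q + 4) ℓ ((j : ℕ) + 1))
    (hcw : ∀ i, p' i CandU.c < p' i CandU.w)
    (Q : List (CandU q ℓ ≃ Fin m))
    (lam : ℕ) (hlam : score s (List.ofFn p' ++ Q) CandU.c = lam)
    (hX : ∀ ix : Fin q, score s (List.ofFn p' ++ Q) (CandU.x ix) + a ⟨3 * q, by omega⟩ =
      lam + a ⟨3 * q + 1, by omega⟩)
    (hY : ∀ iy : Fin q, score s (List.ofFn p' ++ Q) (CandU.y iy) + a ⟨3 * q + 1, by omega⟩ =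
      lam + a ⟨3 * q + 2, by omega⟩)
    (hZ : ∀ iz : Fin q, score s (List.ofFn p' ++ Q) (CandU.z iz) + a ⟨3 * q + 2, by omega⟩ =
      lam + a ⟨3 * q + 3, by omega⟩)
    (hG : score s (List.ofFn p' ++ Q) CandU.g + q * a ⟨3 * q + 3, by omega⟩ =
      lam + q * a ⟨3 * q - 1, by omega⟩)
    (hD : score s (List.ofFn p' ++ Q) CandU.d + q * a ⟨3 * q - 1, by omega⟩ =
      lam + q * a ⟨3 * q, by omega⟩)
    (hH : ∀ (j : Fin (3 * q + 4)) (k : Fin (ℓ j - 1)),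
      score s (List.ofFn p' ++ Q) (CandU.h j k) = lam)
    (hW : score s (List.ofFn p' ++ Q) CandU.w < lam) :
    (∀ T : Fin t → (CandU q ℓ ≃ Fin m),
      (∀ (i : Fin t) (u v : CandU q ℓ),
        u ≠ CandU.g → v ≠ CandU.g → p' i u < p' i v → T i u < T i v) →
      score s (List.ofFn T ++ Q) CandU.c ≤ lam) ∧
    (∀ T : Fin t → (CandU q ℓ ≃ Fin m),
      (∀ (i : Fin t) (u v : CandU q ℓ),
        u ≠ CandU.g → v ≠ CandU.g → p' i u < p' i v → T i u < T i v) →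
      (∀ c', score s (List.ofFn T ++ Q) c' ≤ score s (List.ofFn T ++ Q) CandU.c) →
      score s (List.ofFn T ++ Q) CandU.c = lam) := by
  classical
  -- Basic facts about the scoring vector.
  have hm' : prefL (3 * q + 4) ℓ (3 * q + 4) = m := hm.symm
  have hsle : ∀ (v : Fin m) (jv : ℕ) (hjv : jv < 3 * q + 4),
      prefL (3 * q + 4) ℓ jv ≤ v.val → s v ≤ a ⟨jv, hjv⟩ := by
    intro v jv hjv hle
    obtain ⟨j, hj1, hj2⟩ := exists_block (3 * q + 4) ℓ v.val (by rw [hm']; exact v.isLt)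
    have hjj : jv ≤ (j : ℕ) := by
      by_contra hcon
      push_neg at hcon
      have := prefL_mono (3 * q + 4) ℓ (show (j : ℕ) + 1 ≤ jv by omega)
      omega
    rw [hs v j hj1 hj2]
    exact haAnti.antitone (show (⟨jv, hjv⟩ : Fin (3 * q + 4)) ≤ j from hjj)
  have hsanti : ∀ v v' : Fin m, v ≤ v' → s v' ≤ s v := by
    intro v v' hvv
    obtain ⟨j, hj1, hj2⟩ := exists_block (3 * q + 4) ℓ v.val (by rw [hm']; exact v.isLt)
    rw [hs v j hj1 hj2]
    have := hsle v' (j : ℕ) j.isLt (le_trans hj1 hvv)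
    simpa using this
  have score_ofFn : ∀ (T : Fin t → (CandU q ℓ ≃ Fin m)) (u : CandU q ℓ),
      score s (List.ofFn T ++ Q) u = (∑ i : Fin t, s (T i u)) + score s Q u := by
    intro T u
    simp [score, List.map_ofFn, List.sum_ofFn, Function.comp]
  -- the special candidate occupying the first position of each high block
  have hspec : ∀ (i : Fin t) (jv : ℕ), 3 * q - 1 ≤ jv → jv < 3 * q + 4 →
      ∃ sp : CandU q ℓ, (p' i sp).val = prefL (3 * q + 4) ℓ jv ∧
        (∀ j k, sp ≠ CandU.h j k) ∧ sp ≠ CandU.c ∧ sp ≠ CandU.w := by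
    intro i jv h1 h2
    have hcase : jv = 3 * q - 1 ∨ jv = 3 * q ∨ jv = 3 * q + 1 ∨ jv = 3 * q + 2 ∨
        jv = 3 * q + 3 := by omega
    rcases hcase with rfl | rfl | rfl | rfl | rfl
    · exact ⟨CandU.g, hgpos i, by intro j k; simp, by simp, by simp⟩
    · exact ⟨CandU.d, hdpos i, by intro j k; simp, by simp, by simp⟩
    · exact ⟨CandU.x (S i).1, hxpos i, by intro j k; simp, by simp, by simp⟩
    · exact ⟨CandU.y (S i).2.1, hypos i, by intro j k; simp, by simp, by simp⟩
    · exact ⟨CandU.z (S i).2.2, hzpos i, by intro j k; simp, by simp, by simp⟩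
  -- c and w are placed before g in every p' i
  have hpig : ∀ (i : Fin t) (u : CandU q ℓ), (u = CandU.c ∨ u = CandU.w) →
      (p' i u).val < prefL (3 * q + 4) ℓ (3 * q - 1) := by
    intro i u hu
    by_contra hcon
    push_neg at hcon
    obtain ⟨j, hj1, hj2⟩ := exists_block (3 * q + 4) ℓ (p' i u).val
      (by rw [hm']; exact (p' i u).isLt)
    have hjge : 3 * q - 1 ≤ (j : ℕ) := by
      by_contra hc2
      push_neg at hc2
      have := prefL_mono (3 * q + 4) ℓ (show (j : ℕ) + 1 ≤ 3 * q - 1 by omega)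
      omega
    obtain ⟨sp, hsp1, hsp2, hsp3, hsp4⟩ := hspec i (j : ℕ) hjge j.isLt
    have hspu : sp ≠ u := by rcases hu with rfl | rfl; exacts [hsp3, hsp4]
    have hblock : prefL (3 * q + 4) ℓ ((j : ℕ) + 1) = prefL (3 * q + 4) ℓ (j : ℕ) + ℓ j := by
      simpa using prefL_succ (3 * q + 4) ℓ (j : ℕ) j.isLt
    have huh : ∀ (j' : Fin (3 * q + 4)) (k : Fin (ℓ j' - 1)), u ≠ CandU.h j' k := by
      rcases hu with rfl | rfl <;> intro j' k <;> simp
    set cand : Fin (ℓ j - 1 + 2) → CandU q ℓ := fun k =>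
      if hk : (k : ℕ) < ℓ j - 1 then CandU.h j ⟨(k : ℕ), hk⟩
      else if (k : ℕ) = ℓ j - 1 then u else sp with hcand
    have hrange : ∀ k, prefL (3 * q + 4) ℓ (j : ℕ) ≤ (p' i (cand k)).val ∧
        (p' i (cand k)).val < prefL (3 * q + 4) ℓ (j : ℕ) + ℓ j := by
      intro k
      rw [hcand]
      dsimp only
      split_ifs with hk1 hk2
      · have := hhpos i j ⟨(k : ℕ), hk1⟩
        omega
      · exact ⟨hj1, by omega⟩
      · rw [hsp1]
        exact ⟨le_rfl, by have := hℓ j; omega⟩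
    have hcinj : Function.Injective cand := by
      intro k k' hkk
      by_contra hne2
      have hv : (k : ℕ) ≠ (k' : ℕ) := fun h => hne2 (Fin.ext h)
      rw [hcand] at hkk
      dsimp only at hkk
      split_ifs at hkk with h1 h2 h3 h4 h5 h6
      · injection hkk with e1 e2
        rw [Fin.mk.injEq] at e2
        exact hv e2
      · exact huh _ _ hkk.symm
      · exact hsp2 _ _ hkk.symm
      · exact huh _ _ hkk
      · omega
      · exact hspu hkk.symm
      · exact hsp2 _ _ hkk
      · exact hspu hkk
      · omega
    have hℓj := hℓ j
    let f : Fin (ℓ j - 1 + 2) → Fin (ℓ j) := fun k =>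
      ⟨(p' i (cand k)).val - prefL (3 * q + 4) ℓ (j : ℕ), by have := hrange k; omega⟩
    have hfinj : Function.Injective f := by
      intro k k' hkk
      have h1 := congrArg Fin.val hkk
      simp only [f] at h1
      have h2 := hrange k
      have h3 := hrange k'
      have h4 : (p' i (cand k)).val = (p' i (cand k')).val := by omega
      exact hcinj ((p' i).injective (Fin.ext h4))
    have := Fintype.card_le_of_injective f hfinj
    simp at this
    omega
  -- per-vote bound on scores of c, w and the dummies in any completion
  have key : ∀ (T : Fin t → (CandU q ℓ ≃ Fin m)),
      (∀ (i : Fin t) (u v : CandU q ℓ),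
        u ≠ CandU.g → v ≠ CandU.g → p' i u < p' i v → T i u < T i v) →
      ∀ (i : Fin t) (u : CandU q ℓ),
      (u = CandU.c ∨ u = CandU.w ∨ ∃ (j : Fin (3 * q + 4)) (k : Fin (ℓ j - 1)),
        u = CandU.h j k) →
      s (T i u) ≤ s (p' i u) := by
    intro T hT i u hu
    have hlow : ∀ u : CandU q ℓ, u ≠ CandU.g →
        (p' i u).val < prefL (3 * q + 4) ℓ (3 * q - 1) → s (T i u) ≤ s (p' i u) := by
      intro u hne hlt
      have hrk := rank_lemma (p' i) (T i) CandU.g (hT i) u hne ((p' i u).val) le_rfl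
        (by rw [hgpos i]; omega)
      exact hsanti (p' i u) (T i u) (by rw [Fin.le_def]; exact hrk)
    rcases hu with rfl | rfl | ⟨j, k, rfl⟩
    · exact hlow CandU.c (by simp) (hpig i CandU.c (Or.inl rfl))
    · exact hlow CandU.w (by simp) (hpig i CandU.w (Or.inr rfl))
    · have hb := hhpos i j k
      by_cases hj : (j : ℕ) + 1 ≤ 3 * q - 1
      · refine hlow (CandU.h j k) (by simp) ?_
        have := prefL_mono (3 * q + 4) ℓ hj
        omega
      · have hjge : 3 * q - 1 ≤ (j : ℕ) := by omega
        obtain ⟨sp, hsp1, hsp2, hsp3, hsp4⟩ := hspec i (j : ℕ) hjge j.isLt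
        have hneq : (p' i (CandU.h j k)).val ≠ prefL (3 * q + 4) ℓ (j : ℕ) := by
          intro h
          rw [← hsp1] at h
          exact hsp2 j k ((p' i).injective (Fin.ext h)).symm
        have hgv : (p' i CandU.g).val < (p' i (CandU.h j k)).val := by
          rw [hgpos i]
          have := prefL_mono (3 * q + 4) ℓ hjge
          omega
        have hrk := rank_lemma (p' i) (T i) CandU.g (hT i) (CandU.h j k) (by simp)
          ((p' i (CandU.h j k)).val - 1) (by omega) (by omega)
        have hs1 := hsle (T i (CandU.h j k)) (j : ℕ) j.isLt (by omega)
        have hs2 : s (p' i (CandU.h j k)) = a j := hs _ j hb.1 hb.2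
        rw [hs2]
        simpa using hs1
  -- Part (i)
  have part1 : ∀ T : Fin t → (CandU q ℓ ≃ Fin m),
      (∀ (i : Fin t) (u v : CandU q ℓ),
        u ≠ CandU.g → v ≠ CandU.g → p' i u < p' i v → T i u < T i v) →
      score s (List.ofFn T ++ Q) CandU.c ≤ lam := by
    intro T hT
    rw [← hlam, score_ofFn T, score_ofFn p']
    exact Nat.add_le_add_right
      (Finset.sum_le_sum fun i _ => key T hT i CandU.c (Or.inl rfl)) _
  refine ⟨part1, ?_⟩
  -- Part (ii)
  intro T hT hwin
  have hbadle : ∀ u : CandU q ℓ,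
      (u = CandU.c ∨ u = CandU.w ∨ ∃ (j : Fin (3 * q + 4)) (k : Fin (ℓ j - 1)),
        u = CandU.h j k) →
      score s (List.ofFn T ++ Q) u ≤ score s (List.ofFn p' ++ Q) u := by
    intro u hu
    rw [score_ofFn T, score_ofFn p']
    exact Nat.add_le_add_right (Finset.sum_le_sum fun i _ => key T hT i u hu) _
  -- total score conservation
  have A1 : ∑ u : CandU q ℓ, score s (List.ofFn T ++ Q) u
      = ∑ u : CandU q ℓ, score s (List.ofFn p' ++ Q) u := by
    have hcomm : ∀ (V : Fin t → (CandU q ℓ ≃ Fin m)),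
        ∑ u : CandU q ℓ, ∑ i : Fin t, s (V i u) = ∑ _i : Fin t, ∑ v : Fin m, s v := by
      intro V
      rw [Finset.sum_comm]
      exact Finset.sum_congr rfl fun i _ => Equiv.sum_comp (V i) s
    simp only [score_ofFn]
    rw [Finset.sum_add_distrib, Finset.sum_add_distrib, hcomm T, hcomm p']
  rw [sum_candU q ℓ (fun u => score s (List.ofFn T ++ Q) u),
    sum_candU q ℓ (fun u => score s (List.ofFn p' ++ Q) u)] at A1
  -- score relations for the profile p' ∪ Q
  have hxsum : (∑ ix : Fin q, score s (List.ofFn p' ++ Q) (CandU.x ix))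
      + q * a ⟨3 * q, by omega⟩ = q * lam + q * a ⟨3 * q + 1, by omega⟩ := by
    exact sum_shift q (fun ix => score s (List.ofFn p' ++ Q) (CandU.x ix))
      (a ⟨3 * q, by omega⟩) lam (a ⟨3 * q + 1, by omega⟩) hX
  have hysum : (∑ ix : Fin q, score s (List.ofFn p' ++ Q) (CandU.y ix))
      + q * a ⟨3 * q + 1, by omega⟩ = q * lam + q * a ⟨3 * q + 2, by omega⟩ := by
    exact sum_shift q (fun ix => score s (List.ofFn p' ++ Q) (CandU.y ix))
      (a ⟨3 * q + 1, by omega⟩) lam (a ⟨3 * q + 2, by omega⟩) hY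
  have hzsum : (∑ ix : Fin q, score s (List.ofFn p' ++ Q) (CandU.z ix))
      + q * a ⟨3 * q + 2, by omega⟩ = q * lam + q * a ⟨3 * q + 3, by omega⟩ := by
    exact sum_shift q (fun ix => score s (List.ofFn p' ++ Q) (CandU.z ix))
      (a ⟨3 * q + 2, by omega⟩) lam (a ⟨3 * q + 3, by omega⟩) hZ
  -- winner constraints
  have hwing := hwin CandU.g
  have hwind := hwin CandU.d
  have hwinx : ∑ ix : Fin q, score s (List.ofFn T ++ Q) (CandU.x ix)
      ≤ q * score s (List.ofFn T ++ Q) CandU.c := by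
    calc ∑ ix : Fin q, score s (List.ofFn T ++ Q) (CandU.x ix)
        ≤ ∑ _ix : Fin q, score s (List.ofFn T ++ Q) CandU.c :=
          Finset.sum_le_sum fun ix _ => hwin _
      _ = q * score s (List.ofFn T ++ Q) CandU.c := by simp [mul_comm]
  have hwiny : ∑ ix : Fin q, score s (List.ofFn T ++ Q) (CandU.y ix)
      ≤ q * score s (List.ofFn T ++ Q) CandU.c := by
    calc ∑ ix : Fin q, score s (List.ofFn T ++ Q) (CandU.y ix)
        ≤ ∑ _ix : Fin q, score s (List.ofFn T ++ Q) CandU.c :=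
          Finset.sum_le_sum fun ix _ => hwin _
      _ = q * score s (List.ofFn T ++ Q) CandU.c := by simp [mul_comm]
  have hwinz : ∑ ix : Fin q, score s (List.ofFn T ++ Q) (CandU.z ix)
      ≤ q * score s (List.ofFn T ++ Q) CandU.c := by
    calc ∑ ix : Fin q, score s (List.ofFn T ++ Q) (CandU.z ix)
        ≤ ∑ _ix : Fin q, score s (List.ofFn T ++ Q) CandU.c :=
          Finset.sum_le_sum fun ix _ => hwin _
      _ = q * score s (List.ofFn T ++ Q) CandU.c := by simp [mul_comm]
  have hwle : score s (List.ofFn T ++ Q) CandU.w ≤ score s (List.ofFn p' ++ Q) CandU.w :=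
    hbadle CandU.w (Or.inr (Or.inl rfl))
  have hhle : ∑ j : Fin (3 * q + 4), ∑ k : Fin (ℓ j - 1),
        score s (List.ofFn T ++ Q) (CandU.h j k)
      ≤ ∑ j : Fin (3 * q + 4), ∑ k : Fin (ℓ j - 1),
        score s (List.ofFn p' ++ Q) (CandU.h j k) :=
    Finset.sum_le_sum fun j _ => Finset.sum_le_sum fun k _ =>
      hbadle (CandU.h j k) (Or.inr (Or.inr ⟨j, k, rfl⟩))
  have hfc : score s (List.ofFn T ++ Q) CandU.c ≤ lam := part1 T hT
  have hql : q * score s (List.ofFn T ++ Q) CandU.c ≤ q * lam :=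
    Nat.mul_le_mul_left q hfc
  have hge : lam ≤ score s (List.ofFn T ++ Q) CandU.c := by
    linarith [A1, hlam, hG, hD, hxsum, hysum, hzsum, hwing, hwind, hwinx, hwiny, hwinz,
      hwle, hhle, hql]
  omega
end

section
/- Let C be a finite candidate set, s a scoring vector of length |C|, c ∈ C, P a partial profile on C in which c is fixed, and Q a total profile on C; let λ := s(P̄ ∪ Q, c), which is the same for every completion P̄ of P, and for c' ≠ c set maxpartial(c') := λ − s(Q, c'). If the pair (P, Q) is tight and P̄ is a completion of P in which c is a winner of P̄ ∪ Q (i.e., s(P̄ ∪ Q, c') ≤ λ for every candidate c'), then s(P̄ ∪ Q, c') = λ for every candidate c' ≠ c; equivalently, every c' ≠ c receives exactly its maximum partial score maxpartial(c') from P̄. -/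
open scoped Classical

/-- A total order `T` extends (completes) a partial order `p` on the candidates:
whenever `a` is preferred to `b` in `p`, the position of `a` is above that of `b`. -/
def Extends {C : Type*} {m : ℕ} (p : C → C → Prop) (T : C ≃ Fin m) : Prop :=
  ∀ a b, p a b → T a < T b

/-- Candidate `c'` is fixed at position `pos` in the partial vote `p`:
it occupies position `pos` in every completion of `p`. -/
def FixedAt {C : Type*} {m : ℕ} (p : C → C → Prop) (c' : C) (pos : Fin m) : Prop :=
  ∀ T : C ≃ Fin m, Extends p T → T c' = pos

/-- A position of a partial vote is available if no candidate is fixed at it. -/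
def Available {C : Type*} {m : ℕ} (p : C → C → Prop) (pos : Fin m) : Prop :=
  ¬ ∃ c', FixedAt p c' pos

/-- `fixedScore s P c'` is the total score candidate `c'` receives, over the votes of the
partial profile `P` in which it is fixed, from its fixed positions. -/
noncomputable def fixedScore {C : Type*} {m n : ℕ} (s : Fin m → ℕ)
    (P : Fin n → (C → C → Prop)) (c' : C) : ℕ :=
  ∑ i : Fin n, if h : ∃ pos : Fin m, FixedAt (P i) c' pos then s h.choose else 0

/-- let `P` be a partial profile in which the distinguished candidate `c` is
fixed, `Q` a total profile, and `λ` the (completion-independent) score of `c` in any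
`P̄ ∪ Q`.  If the pair `(P, Q)` is tight — the sum over the votes of `P` of the score
values of the available positions equals `Σ_{c' ≠ c} (maxpartial(c') − fixed_P(c'))`,
where `maxpartial(c') = λ − s(Q, c')` — and `P̄` is a completion of `P` in which `c` is a
winner of `P̄ ∪ Q`, then `s(P̄ ∪ Q, c') = λ` for every candidate `c' ≠ c`. -/
theorem stmt12 {C : Type*} [Fintype C] [DecidableEq C] {m n : ℕ}
    (s : Fin m → ℕ) (hanti : Antitone s)
    (c : C)
    (P : Fin n → (C → C → Prop))
    (hpo : ∀ i, Irreflexive (P i) ∧ Transitive (P i))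
    (Q : List (C ≃ Fin m))
    (hfix : ∀ i : Fin n, ∃ pos : Fin m, FixedAt (P i) c pos)
    (lam : ℕ)
    (hlam : ∀ T : Fin n → (C ≃ Fin m), (∀ i, Extends (P i) (T i)) →
      score s (List.ofFn T ++ Q) c = lam)
    (htight :
      (∑ i : Fin n,
        ∑ pos ∈ Finset.univ.filter (fun pos : Fin m => Available (P i) pos), (s pos : ℤ)) =
      ∑ c' ∈ Finset.univ.filter (fun c' : C => c' ≠ c),
        (((lam : ℤ) - score s Q c') - fixedScore s P c'))
    (T : Fin n → (C ≃ Fin m)) (hT : ∀ i, Extends (P i) (T i))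
    (hwin : ∀ c', score s (List.ofFn T ++ Q) c' ≤ score s (List.ofFn T ++ Q) c) :
    ∀ c', c' ≠ c → score s (List.ofFn T ++ Q) c' = lam := by
  intro c' hc'
  set D : Finset C := Finset.univ.filter (fun c' : C => c' ≠ c) with hD
  have hscore_split : ∀ d : C, score s (List.ofFn T ++ Q) d
      = (∑ i : Fin n, s (T i d)) + score s Q d := by
    intro d
    simp [score, List.sum_ofFn, Function.comp]
  have hc_lam : score s (List.ofFn T ++ Q) c = lam := hlam T hT
  -- per-candidate decomposition of completion score into fixed and non-fixed parts
  have hfixEq : ∀ d : C, (∑ i : Fin n, s (T i d))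
      = fixedScore s P d + ∑ i : Fin n,
          (if ∃ pos : Fin m, FixedAt (P i) d pos then 0 else s (T i d)) := by
    intro d
    rw [fixedScore, ← Finset.sum_add_distrib]
    refine Finset.sum_congr rfl fun i _ => ?_
    by_cases h : ∃ pos : Fin m, FixedAt (P i) d pos
    · rw [dif_pos h, if_pos h, add_zero, h.choose_spec (T i) (hT i)]
    · rw [dif_neg h, if_neg h, zero_add]
  -- not-fixed candidates correspond exactly to available positions
  have hiff : ∀ (i : Fin n) (d : C),
      (¬ ∃ pos : Fin m, FixedAt (P i) d pos) ↔ Available (P i) (T i d) := by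
    intro i d
    constructor
    · intro hnf hav
      obtain ⟨c'', hc''⟩ := hav
      have : T i c'' = T i d := hc'' (T i) (hT i)
      have : c'' = d := (T i).injective this
      exact hnf ⟨T i d, this ▸ hc''⟩
    · intro hav hf
      obtain ⟨pos, hpos⟩ := hf
      have : T i d = pos := hpos (T i) (hT i)
      exact hav ⟨d, this ▸ hpos⟩
  have hnotfix : ∀ i : Fin n,
      ∑ d ∈ Finset.univ.filter (fun d : C => ¬ ∃ pos : Fin m, FixedAt (P i) d pos), s (T i d)
      = ∑ pos ∈ Finset.univ.filter (fun pos : Fin m => Available (P i) pos), s pos := by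
    intro i
    refine Finset.sum_equiv (T i) ?_ ?_
    · intro d
      simp only [Finset.mem_filter, Finset.mem_univ, true_and]
      exact hiff i d
    · intro d _; rfl
  -- sum of non-fixed parts over D equals the tightness LHS
  have hA : ∑ d ∈ D, ∑ i : Fin n, (if ∃ pos : Fin m, FixedAt (P i) d pos then 0 else s (T i d))
      = ∑ i : Fin n,
        ∑ pos ∈ Finset.univ.filter (fun pos : Fin m => Available (P i) pos), s pos := by
    rw [Finset.sum_comm]
    refine Finset.sum_congr rfl fun i _ => ?_
    rw [← hnotfix i]
    have : ∑ d ∈ D, (if ∃ pos : Fin m, FixedAt (P i) d pos then 0 else s (T i d))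
        = ∑ d : C, (if ∃ pos : Fin m, FixedAt (P i) d pos then 0 else s (T i d)) := by
      refine Finset.sum_subset (Finset.subset_univ D) ?_
      intro x _ hx
      have hxc : x = c := by
        by_contra h
        exact hx (by simp [hD, h])
      rw [if_pos (hxc ▸ hfix i)]
    rw [this, Finset.sum_filter]
    refine Finset.sum_congr rfl fun d _ => ?_
    by_cases h : ∃ pos : Fin m, FixedAt (P i) d pos <;> simp [h]
  -- key: total sum over D equals |D| * lam
  have key : ∑ d ∈ D, (score s (List.ofFn T ++ Q) d : ℤ) = ∑ d ∈ D, (lam : ℤ) := by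
    have : ∀ d ∈ D, (score s (List.ofFn T ++ Q) d : ℤ)
        = (fixedScore s P d : ℤ)
          + (∑ i : Fin n, (if ∃ pos : Fin m, FixedAt (P i) d pos then 0 else s (T i d)) : ℕ)
          + (score s Q d : ℤ) := by
      intro d _
      rw [hscore_split d, hfixEq d]
      push_cast
      ring
    rw [Finset.sum_congr rfl this]
    have hAZ : (∑ d ∈ D, (∑ i : Fin n,
        (if ∃ pos : Fin m, FixedAt (P i) d pos then 0 else s (T i d)) : ℕ) : ℤ)
        = ∑ i : Fin n,
          ∑ pos ∈ Finset.univ.filter (fun pos : Fin m => Available (P i) pos), (s pos : ℤ) := by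
      push_cast
      exact_mod_cast congrArg (Nat.cast : ℕ → ℤ) hA
    calc ∑ d ∈ D, ((fixedScore s P d : ℤ)
          + (∑ i : Fin n, (if ∃ pos : Fin m, FixedAt (P i) d pos then 0 else s (T i d)) : ℕ)
          + (score s Q d : ℤ))
        = ∑ d ∈ D, (fixedScore s P d : ℤ)
          + (∑ d ∈ D, ((∑ i : Fin n,
              (if ∃ pos : Fin m, FixedAt (P i) d pos then 0 else s (T i d)) : ℕ) : ℤ))
          + ∑ d ∈ D, (score s Q d : ℤ) := by
          rw [← Finset.sum_add_distrib, ← Finset.sum_add_distrib]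
      _ = ∑ d ∈ D, (lam : ℤ) := by
          rw [← Nat.cast_sum, hAZ, htight]
          push_cast
          rw [← Finset.sum_add_distrib, ← Finset.sum_add_distrib]
          refine Finset.sum_congr rfl fun d _ => ?_
          ring
  -- squeeze
  have hle : ∀ d ∈ D, (score s (List.ofFn T ++ Q) d : ℤ) ≤ (lam : ℤ) := by
    intro d _
    exact_mod_cast hc_lam ▸ hwin d
  have := (Finset.sum_eq_sum_iff_of_le hle).mp key
  have hc'D : c' ∈ D := by simp [hD, hc']
  exact_mod_cast this c' hc'D
end
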